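/- arXiv:1711.09650 — 4 statements merged into one kernel-verified Lean document; each statement's English description precedes it below -/
import Mathlib

section
/- Let λ > 0 and let ψ ∈ P^r satisfy Γ_λ(ψ) = L(1). Then 0 < ψ(t₀) < 1, the maximum of |ψ| over [t₀, t₁] is attained at the left endpoint with sup_{t∈[t₀,t₁]} |ψ(t)| = ψ(t₀), and the maximum of |ψ'| over [t₀, t₁] satisfies sup_{t∈[t₀,t₁]} |ψ'(t)| = −ψ'(t₀). -/
open Polynomial MeasureTheory intervalIntegral

/-- The rescaled Legendre polynomials on `[t₀, t₁]`: `K i` has degree `i`,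
`K i (t₁) = 1`, `K i (t₀) = (-1)^i`, and they are `L²(t₀,t₁)`-orthogonal with
`∫ K i ^ 2 = (t₁ - t₀)/(2 i + 1)`. -/
def IsLegendreBasis (t₀ t₁ : ℝ) (K : ℕ → Polynomial ℝ) : Prop :=
  (∀ i, (K i).natDegree = i) ∧ (∀ i, (K i).eval t₁ = 1) ∧
  (∀ i, (K i).eval t₀ = (-1 : ℝ) ^ i) ∧
  (∀ i j, (∫ t in t₀..t₁, (K i).eval t * (K j).eval t) =
    if i = j then (t₁ - t₀) / (2 * (i : ℝ) + 1) else 0)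

/-- The lifting operator `L(z) = (z/k) ∑_{i=0}^r (-1)^i (2i+1) K_i`. -/
noncomputable def Lop (t₀ t₁ : ℝ) (r : ℕ) (K : ℕ → Polynomial ℝ) (z : ℝ) : Polynomial ℝ :=
  Polynomial.C (z / (t₁ - t₀)) *
    ∑ i ∈ Finset.range (r + 1), Polynomial.C ((-1 : ℝ) ^ i * (2 * (i : ℝ) + 1)) * K i

/-- The endpoint lifting operator `L̂(z) = (z/k) ∑_{i=0}^r (2i+1) K_i`. -/
noncomputable def LopE (t₀ t₁ : ℝ) (r : ℕ) (K : ℕ → Polynomial ℝ) (z : ℝ) : Polynomial ℝ :=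
  Polynomial.C (z / (t₁ - t₀)) *
    ∑ i ∈ Finset.range (r + 1), Polynomial.C (2 * (i : ℝ) + 1) * K i

/-- The scalar dG operator `Γ_λ(v) = v' + L(v(t₀)) + λ v`. -/
noncomputable def Gam (t₀ t₁ : ℝ) (r : ℕ) (K : ℕ → Polynomial ℝ) (lam : ℝ)
    (v : Polynomial ℝ) : Polynomial ℝ :=
  Polynomial.derivative v + Lop t₀ t₁ r K (v.eval t₀) + Polynomial.C lam * v

noncomputable def inn (t₀ t₁ : ℝ) (p q : Polynomial ℝ) : ℝ := ∫ t in t₀..t₁, p.eval t * q.eval t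

section
variable (t₀ t₁ : ℝ)

lemma inn_integrable (p q : Polynomial ℝ) :
    IntervalIntegrable (fun t => p.eval t * q.eval t) volume t₀ t₁ :=
  (p.continuous_aeval.mul q.continuous_aeval).intervalIntegrable _ _

lemma inn_comm (p q : Polynomial ℝ) : inn t₀ t₁ p q = inn t₀ t₁ q p := by
  unfold inn; simp_rw [mul_comm]

lemma inn_add_left (p q s : Polynomial ℝ) :
    inn t₀ t₁ (p + q) s = inn t₀ t₁ p s + inn t₀ t₁ q s := by
  unfold inn
  rw [← intervalIntegral.integral_add (inn_integrable t₀ t₁ p s) (inn_integrable t₀ t₁ q s)]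
  simp [add_mul]

lemma inn_C_mul_left (a : ℝ) (p q : Polynomial ℝ) :
    inn t₀ t₁ (C a * p) q = a * inn t₀ t₁ p q := by
  unfold inn
  rw [← intervalIntegral.integral_const_mul]
  simp [mul_assoc]

lemma inn_zero_left (q : Polynomial ℝ) : inn t₀ t₁ 0 q = 0 := by
  unfold inn; simp

lemma inn_sum_left {ι : Type*} (s : Finset ι) (f : ι → Polynomial ℝ) (q : Polynomial ℝ) :
    inn t₀ t₁ (∑ i ∈ s, f i) q = ∑ i ∈ s, inn t₀ t₁ (f i) q := by
  classical
  induction s using Finset.induction_on with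
  | empty => simp [inn_zero_left]
  | insert _ _ h ih => rw [Finset.sum_insert h, inn_add_left, ih, Finset.sum_insert h]

lemma inn_deriv (p q : Polynomial ℝ) :
    inn t₀ t₁ (derivative p) q + inn t₀ t₁ p (derivative q)
      = (p * q).eval t₁ - (p * q).eval t₀ := by
  have h : ∀ t ∈ Set.uIcc t₀ t₁,
      HasDerivAt (fun x => (p * q).eval x) ((derivative (p * q)).eval t) t :=
    fun t _ => (p * q).hasDerivAt t
  have h2 := intervalIntegral.integral_eq_sub_of_hasDerivAt h
    ((derivative (p * q)).continuous_aeval.intervalIntegrable _ _)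
  unfold inn
  rw [← intervalIntegral.integral_add (inn_integrable t₀ t₁ (derivative p) q)
      (inn_integrable t₀ t₁ p (derivative q))]
  rw [← h2]
  congr 1
  funext t
  simp [derivative_mul]

end

section
variable {t₀ t₁ : ℝ} {K : ℕ → Polynomial ℝ}

lemma K_lead_ne (hdeg : ∀ i, (K i).natDegree = i) (hval1 : ∀ i, (K i).eval t₁ = 1) (i : ℕ) :
    (K i).coeff i ≠ 0 := by
  have h0 : K i ≠ 0 := fun h => by
    have := hval1 i; rw [h] at this; simp at this
  have := Polynomial.leadingCoeff_ne_zero.mpr h0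
  rwa [Polynomial.leadingCoeff, hdeg i] at this

lemma K_zero_eq (hdeg : ∀ i, (K i).natDegree = i) (hval1 : ∀ i, (K i).eval t₁ = 1) :
    K 0 = 1 := by
  have h := Polynomial.eq_C_of_natDegree_eq_zero (hdeg 0)
  have h1 := hval1 0
  rw [h] at h1 ⊢
  simp at h1
  rw [h1]; simp

/-- Every polynomial of `natDegree ≤ n` is a combination of `K 0, …, K n`. -/
lemma exists_rep (hdeg : ∀ i, (K i).natDegree = i) (hval1 : ∀ i, (K i).eval t₁ = 1) :
    ∀ (n : ℕ) (p : Polynomial ℝ), p.natDegree ≤ n →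
      ∃ f : ℕ → ℝ, p = ∑ i ∈ Finset.range (n + 1), C (f i) * K i := by
  intro n
  induction n with
  | zero =>
    intro p hp
    refine ⟨fun _ => p.coeff 0, ?_⟩
    rw [show (0:ℕ)+1 = 1 from rfl, Finset.sum_range_one, K_zero_eq hdeg hval1, mul_one]
    exact Polynomial.eq_C_of_natDegree_eq_zero (Nat.le_zero.mp hp)
  | succ n ih =>
    intro p hp
    set α := p.coeff (n + 1) / (K (n + 1)).coeff (n + 1) with hα
    have hq : (p - C α * K (n + 1)).natDegree ≤ n := by
      apply Polynomial.natDegree_le_iff_coeff_eq_zero.mpr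
      intro N hN
      rcases Nat.lt_or_ge (n + 1) N with h | h
      · have h1 : p.coeff N = 0 := Polynomial.natDegree_le_iff_coeff_eq_zero.mp hp N h
        have h2 : (K (n + 1)).coeff N = 0 := by
          apply Polynomial.coeff_eq_zero_of_natDegree_lt; rw [hdeg]; exact h
        simp [h1, h2]
      · have hN1 : N = n + 1 := le_antisymm h hN
        subst hN1
        simp only [Polynomial.coeff_sub, Polynomial.coeff_C_mul, hα]
        field_simp [K_lead_ne hdeg hval1 (n+1)]
        ring
    obtain ⟨f, hf⟩ := ih _ hq
    refine ⟨fun i => if i = n + 1 then α else f i, ?_⟩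
    rw [Finset.sum_range_succ]
    have : ∑ i ∈ Finset.range (n + 1), C (if i = n + 1 then α else f i) * K i
        = ∑ i ∈ Finset.range (n + 1), C (f i) * K i := by
      apply Finset.sum_congr rfl
      intro i hi
      rw [if_neg (by simp at hi; omega)]
    rw [this, ← hf]
    have hb : (fun i => if i = n + 1 then α else f i) (n + 1) = α := by simp
    rw [hb]
    ring

/-- Any polynomial of degree `< j` is orthogonal to `K j`. -/
lemma low_orth (hdeg : ∀ i, (K i).natDegree = i) (hval1 : ∀ i, (K i).eval t₁ = 1)
    (horth : ∀ i j, (∫ t in t₀..t₁, (K i).eval t * (K j).eval t) =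
      if i = j then (t₁ - t₀) / (2 * (i : ℝ) + 1) else 0)
    {m j : ℕ} (hmj : m < j) (p : Polynomial ℝ) (hp : p.natDegree ≤ m) :
    inn t₀ t₁ p (K j) = 0 := by
  obtain ⟨f, hf⟩ := exists_rep hdeg hval1 m p hp
  rw [hf, inn_sum_left]
  apply Finset.sum_eq_zero
  intro i hi
  rw [inn_C_mul_left]
  have : inn t₀ t₁ (K i) (K j) = 0 := by
    have := horth i j
    rw [if_neg (by simp at hi; omega)] at this
    exact this
  rw [this, mul_zero]

end

noncomputable def wP (t₀ t₁ : ℝ) : Polynomial ℝ := (X - C t₀) * (C t₁ - X)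

section
variable (t₀ t₁ : ℝ)

lemma wP_eval_left : (wP t₀ t₁).eval t₀ = 0 := by simp [wP]
lemma wP_eval_right : (wP t₀ t₁).eval t₁ = 0 := by simp [wP]
lemma wP_natDegree_le : (wP t₀ t₁).natDegree ≤ 2 := by
  apply le_trans (Polynomial.natDegree_mul_le)
  have h1 : (X - C t₀).natDegree ≤ 1 := Polynomial.natDegree_X_sub_C_le t₀
  have h2 : (C t₁ - X).natDegree ≤ 1 := by
    have : C t₁ - X = -(X - C t₁) := by ring
    rw [this, Polynomial.natDegree_neg]
    exact Polynomial.natDegree_X_sub_C_le t₁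
  omega

lemma wP_deriv : derivative (wP t₀ t₁) = C t₀ + C t₁ - 2 * X := by
  unfold wP
  rw [derivative_mul]
  simp
  ring

lemma wP_eq : wP t₀ t₁ = (C t₀ + C t₁) * X - X ^ 2 - C t₀ * C t₁ := by
  unfold wP; ring

lemma wP_deriv_eval_left : (derivative (wP t₀ t₁)).eval t₀ = t₁ - t₀ := by
  rw [wP_deriv]; simp; ring
lemma wP_deriv_eval_right : (derivative (wP t₀ t₁)).eval t₁ = -(t₁ - t₀) := by
  rw [wP_deriv]; simp; ring

lemma wP_eval_nonneg {t : ℝ} (h : t ∈ Set.Icc t₀ t₁) : 0 ≤ (wP t₀ t₁).eval t := by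
  simp only [wP, eval_mul, eval_sub, eval_X, eval_C]
  have := h.1; have := h.2
  nlinarith
end

section
variable {t₀ t₁ : ℝ} {K : ℕ → Polynomial ℝ}

lemma coeff_M (hdeg : ∀ i, (K i).natDegree = i) {j : ℕ} (hj : 1 ≤ j) :
    (derivative (wP t₀ t₁ * derivative (K j))).coeff j
      = -((j : ℝ) * ((j : ℝ) + 1)) * (K j).coeff j := by
  set Q := derivative (K j) with hQ
  have hQj : Q.coeff j = 0 := by
    rw [hQ, coeff_derivative, Polynomial.coeff_eq_zero_of_natDegree_lt (by rw [hdeg]; omega),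
      zero_mul]
  have hQj1 : Q.coeff (j + 1) = 0 := by
    rw [hQ, coeff_derivative, Polynomial.coeff_eq_zero_of_natDegree_lt (by rw [hdeg]; omega),
      zero_mul]
  have hQjm : Q.coeff (j - 1) = (K j).coeff j * (j : ℝ) := by
    rw [hQ, coeff_derivative]
    congr 1
    · congr 1; omega
    · rw [Nat.cast_sub hj]; push_cast; ring
  rw [coeff_derivative]
  have hwq : (wP t₀ t₁ * Q).coeff (j + 1)
      = (t₀ + t₁) * Q.coeff j - Q.coeff (j - 1) - (t₀ * t₁) * Q.coeff (j + 1) := by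
    rw [wP_eq]
    have e1 : ((C t₀ + C t₁) * X * Q).coeff (j + 1) = (t₀ + t₁) * Q.coeff j := by
      rw [mul_assoc, ← Polynomial.C_add, Polynomial.coeff_C_mul, Polynomial.coeff_X_mul]
    have e2 : (X ^ 2 * Q).coeff (j + 1) = Q.coeff (j - 1) := by
      have : j + 1 = (j - 1) + 2 := by omega
      rw [this, Polynomial.coeff_X_pow_mul]
    have e3 : (C t₀ * C t₁ * Q).coeff (j + 1) = (t₀ * t₁) * Q.coeff (j + 1) := by
      rw [← Polynomial.C_mul, Polynomial.coeff_C_mul]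
    rw [sub_mul, sub_mul, Polynomial.coeff_sub, Polynomial.coeff_sub, e1, e2, e3]
  rw [hwq, hQj, hQj1, hQjm]
  push_cast
  ring

end

section
variable {t₀ t₁ : ℝ} {K : ℕ → Polynomial ℝ}

lemma selfadj_aux (p q : Polynomial ℝ) :
    inn t₀ t₁ (derivative (wP t₀ t₁ * derivative p)) q
      = -inn t₀ t₁ (wP t₀ t₁ * derivative p) (derivative q) := by
  have h := inn_deriv t₀ t₁ (wP t₀ t₁ * derivative p) q
  have hz : (wP t₀ t₁ * derivative p * q).eval t₁ = 0 := by
    simp [eval_mul, wP_eval_right]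
  have hz0 : (wP t₀ t₁ * derivative p * q).eval t₀ = 0 := by
    simp [eval_mul, wP_eval_left]
  rw [hz, hz0] at h
  linarith

lemma selfadj (p q : Polynomial ℝ) :
    inn t₀ t₁ (derivative (wP t₀ t₁ * derivative p)) q
      = inn t₀ t₁ (derivative (wP t₀ t₁ * derivative q)) p := by
  rw [selfadj_aux, selfadj_aux]
  congr 1
  unfold inn
  apply intervalIntegral.integral_congr
  intro t _
  simp only [eval_mul]
  ring

/-- The Sturm–Liouville ODE for the Legendre basis. -/
lemma K_ode (ht : t₀ < t₁) (hdeg : ∀ i, (K i).natDegree = i)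
    (hval1 : ∀ i, (K i).eval t₁ = 1)
    (horth : ∀ i j, (∫ t in t₀..t₁, (K i).eval t * (K j).eval t) =
      if i = j then (t₁ - t₀) / (2 * (i : ℝ) + 1) else 0)
    (j : ℕ) :
    derivative (wP t₀ t₁ * derivative (K j))
      = C (-((j : ℝ) * ((j : ℝ) + 1))) * K j := by
  rcases Nat.eq_zero_or_pos j with hj | hj
  · subst hj
    rw [K_zero_eq hdeg hval1]
    simp
  -- degree bound
  set M := derivative (wP t₀ t₁ * derivative (K j)) with hM
  have hMdeg : M.natDegree ≤ j := by
    have h1 : (wP t₀ t₁ * derivative (K j)).natDegree ≤ j + 1 := by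
      apply le_trans Polynomial.natDegree_mul_le
      have := wP_natDegree_le t₀ t₁
      have h2 := Polynomial.natDegree_derivative_le (K j)
      rw [hdeg] at h2
      omega
    have h6' := Polynomial.natDegree_derivative_le (wP t₀ t₁ * derivative (K j))
    rw [← hM] at h6'
    omega
  obtain ⟨f, hf⟩ := exists_rep hdeg hval1 j M hMdeg
  -- lower coefficients vanish
  have hfz : ∀ i, i < j → f i = 0 := by
    intro i hij
    have h1 : inn t₀ t₁ M (K i) = 0 := by
      have h2 : inn t₀ t₁ M (K i) = inn t₀ t₁ (derivative (wP t₀ t₁ * derivative (K i))) (K j) :=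
        selfadj _ _
      rw [h2]
      refine low_orth hdeg hval1 horth hij _ ?_
      rcases Nat.eq_zero_or_pos i with hi0 | hi0
      · subst hi0
        rw [K_zero_eq hdeg hval1]
        simp
      · have h3 : (wP t₀ t₁ * derivative (K i)).natDegree ≤ i + 1 := by
          apply le_trans Polynomial.natDegree_mul_le
          have := wP_natDegree_le t₀ t₁
          have h4 := Polynomial.natDegree_derivative_le (K i)
          rw [hdeg] at h4
          omega
        have := Polynomial.natDegree_derivative_le (wP t₀ t₁ * derivative (K i))
        omega
    rw [hf, inn_sum_left] at h1
    have h5 : ∀ m ∈ Finset.range (j + 1), m ≠ i → inn t₀ t₁ (C (f m) * K m) (K i) = 0 := by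
      intro m _ hmi
      rw [inn_C_mul_left]
      have := horth m i
      rw [if_neg hmi] at this
      rw [show inn t₀ t₁ (K m) (K i) = 0 from this, mul_zero]
    rw [Finset.sum_eq_single i (fun m hm hmi => h5 m hm hmi)
      (fun h => absurd (Finset.mem_range.mpr (by omega)) h)] at h1
    rw [inn_C_mul_left] at h1
    have h6 := horth i i
    rw [if_pos rfl] at h6
    rw [show inn t₀ t₁ (K i) (K i) = (t₁ - t₀) / (2 * (i:ℝ) + 1) from h6] at h1
    have h7 : (t₁ - t₀) / (2 * (i:ℝ) + 1) ≠ 0 := by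
      apply div_ne_zero (by linarith) (by positivity)
    exact (mul_eq_zero.mp h1).resolve_right h7
  -- hence M = C (f j) * K j
  have hMfj : M = C (f j) * K j := by
    rw [hf, Finset.sum_range_succ]
    rw [Finset.sum_eq_zero (fun i hi => by
      rw [hfz i (Finset.mem_range.mp hi), map_zero, zero_mul])]
    rw [zero_add]
  -- identify f j via leading coefficient
  have hco := coeff_M (t₀ := t₀) (t₁ := t₁) hdeg hj
  rw [← hM, hMfj] at hco
  rw [Polynomial.coeff_C_mul] at hco
  have hfj : f j = -((j : ℝ) * ((j : ℝ) + 1)) :=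
    mul_right_cancel₀ (K_lead_ne hdeg hval1 j) hco
  rw [hMfj, hfj]

end

section
variable {t₀ t₁ : ℝ} {K : ℕ → Polynomial ℝ}

/-- Endpoint values of the derivative of the Legendre basis. -/
lemma K_deriv_left (ht : t₀ < t₁) (hdeg : ∀ i, (K i).natDegree = i)
    (hval0 : ∀ i, (K i).eval t₀ = (-1 : ℝ) ^ i) (hval1 : ∀ i, (K i).eval t₁ = 1)
    (horth : ∀ i j, (∫ t in t₀..t₁, (K i).eval t * (K j).eval t) =
      if i = j then (t₁ - t₀) / (2 * (i : ℝ) + 1) else 0) (j : ℕ) :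
    (derivative (K j)).eval t₀ = (-1 : ℝ) ^ (j + 1) * ((j : ℝ) * ((j : ℝ) + 1)) / (t₁ - t₀) := by
  have h := K_ode ht hdeg hval1 horth j
  have h2 := congrArg (Polynomial.eval t₀) h
  rw [derivative_mul] at h2
  simp only [eval_add, eval_mul, eval_C, wP_eval_left, wP_deriv_eval_left, hval0 j] at h2
  rw [zero_mul, add_zero] at h2
  have hk : t₁ - t₀ ≠ 0 := by linarith
  field_simp at h2 ⊢
  rw [pow_succ]
  nlinarith [h2]

lemma K_deriv_right (ht : t₀ < t₁) (hdeg : ∀ i, (K i).natDegree = i)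
    (hval1 : ∀ i, (K i).eval t₁ = 1)
    (horth : ∀ i j, (∫ t in t₀..t₁, (K i).eval t * (K j).eval t) =
      if i = j then (t₁ - t₀) / (2 * (i : ℝ) + 1) else 0) (j : ℕ) :
    (derivative (K j)).eval t₁ = ((j : ℝ) * ((j : ℝ) + 1)) / (t₁ - t₀) := by
  have h := K_ode ht hdeg hval1 horth j
  have h2 := congrArg (Polynomial.eval t₁) h
  rw [derivative_mul] at h2
  simp only [eval_add, eval_mul, eval_C, wP_eval_right, wP_deriv_eval_right, hval1 j] at h2
  rw [zero_mul, add_zero] at h2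
  have hk : t₁ - t₀ ≠ 0 := by linarith
  field_simp at h2 ⊢
  linarith

/-- A polynomial whose derivative has the sign pattern of `t - mid` is maximized
at the endpoints on `[t₀, t₁]`. -/
lemma poly_le_max_endpoints (ht : t₀ < t₁) (F : Polynomial ℝ) (s : ℝ → ℝ)
    (hs : ∀ t, 0 ≤ s t)
    (hd : ∀ t, (derivative F).eval t = (2 * t - (t₀ + t₁)) * s t) :
    ∀ t ∈ Set.Icc t₀ t₁, F.eval t ≤ max (F.eval t₀) (F.eval t₁) := by
  set m := (t₀ + t₁) / 2 with hm
  have h1 : AntitoneOn (fun t => F.eval t) (Set.Icc t₀ m) := by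
    apply antitoneOn_of_deriv_nonpos (convex_Icc _ _) (Polynomial.continuous F).continuousOn
    · intro t _
      exact (F.hasDerivAt t).differentiableAt.differentiableWithinAt
    · intro t htm
      rw [interior_Icc] at htm
      rw [Polynomial.deriv, hd]
      apply mul_nonpos_of_nonpos_of_nonneg _ (hs t)
      have := htm.2
      rw [hm] at this
      linarith
  have h2 : MonotoneOn (fun t => F.eval t) (Set.Icc m t₁) := by
    apply monotoneOn_of_deriv_nonneg (convex_Icc _ _) (Polynomial.continuous F).continuousOn
    · intro t _
      exact (F.hasDerivAt t).differentiableAt.differentiableWithinAt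
    · intro t htm
      rw [interior_Icc] at htm
      rw [Polynomial.deriv, hd]
      apply mul_nonneg _ (hs t)
      have := htm.1
      rw [hm] at this
      linarith
  intro t htI
  rcases le_total t m with h | h
  · refine le_trans ?_ (le_max_left _ _)
    exact h1 ⟨le_refl _, by rw [hm]; linarith⟩ ⟨htI.1, h⟩ htI.1
  · refine le_trans ?_ (le_max_right _ _)
    exact h2 ⟨h, htI.2⟩ ⟨by rw [hm]; linarith, le_refl _⟩ htI.2

end

section
variable {t₀ t₁ : ℝ} {K : ℕ → Polynomial ℝ}

/-- The Legendre basis polynomials are bounded by 1 on the interval. -/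
lemma K_abs_le (ht : t₀ < t₁) (hdeg : ∀ i, (K i).natDegree = i)
    (hval0 : ∀ i, (K i).eval t₀ = (-1 : ℝ) ^ i) (hval1 : ∀ i, (K i).eval t₁ = 1)
    (horth : ∀ i j, (∫ t in t₀..t₁, (K i).eval t * (K j).eval t) =
      if i = j then (t₁ - t₀) / (2 * (i : ℝ) + 1) else 0) (j : ℕ) :
    ∀ t ∈ Set.Icc t₀ t₁, |(K j).eval t| ≤ 1 := by
  rcases Nat.eq_zero_or_pos j with hj | hj
  · subst hj; rw [K_zero_eq hdeg hval1]; intro t _; simp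
  set N : ℝ := (j : ℝ) * ((j : ℝ) + 1) with hN
  have hN0 : 0 < N := by
    have : 1 ≤ (j : ℝ) := by exact_mod_cast hj
    rw [hN]; nlinarith
  set Q := derivative (K j) with hQ
  have hode : derivative (wP t₀ t₁) * Q + wP t₀ t₁ * derivative Q = -(C N * K j) := by
    have h := K_ode ht hdeg hval1 horth j
    rw [derivative_mul] at h
    rw [h, ← hN, map_neg, neg_mul]
  set F := C N * (K j * K j) + wP t₀ t₁ * (Q * Q) with hF
  have hdF : derivative F = -(derivative (wP t₀ t₁)) * (Q * Q) := by
    rw [hF]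
    simp only [derivative_add, derivative_mul, derivative_C, zero_mul]
    linear_combination (2 * Q) * hode
  have hsign : ∀ t, (derivative F).eval t = (2 * t - (t₀ + t₁)) * (Q.eval t * Q.eval t) := by
    intro t
    rw [hdF]
    simp only [eval_mul, eval_neg, wP_deriv, eval_sub, eval_add, eval_C, eval_X, eval_ofNat]
    ring
  have hbound := poly_le_max_endpoints ht F _ (fun t => mul_self_nonneg _) hsign
  have hFt₀ : F.eval t₀ = N := by
    simp only [hF, eval_add, eval_mul, eval_C, wP_eval_left, hval0 j, zero_mul, add_zero]
    have : (-1 : ℝ) ^ j * (-1 : ℝ) ^ j = 1 := by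
      rw [← pow_add]
      exact Even.neg_one_pow ⟨j, rfl⟩
    rw [this, mul_one]
  have hFt₁ : F.eval t₁ = N := by
    simp only [hF, eval_add, eval_mul, eval_C, wP_eval_right, hval1 j, zero_mul, add_zero,
      mul_one]
  intro t htI
  have h1 : F.eval t ≤ N := by
    have := hbound t htI
    rw [hFt₀, hFt₁, max_self] at this
    exact this
  have h2 : N * ((K j).eval t * (K j).eval t) ≤ F.eval t := by
    simp only [hF, eval_add, eval_mul, eval_C]
    have := mul_nonneg (wP_eval_nonneg t₀ t₁ htI) (mul_self_nonneg (Q.eval t))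
    linarith
  have h3 : (K j).eval t * (K j).eval t ≤ 1 := by
    by_contra hcon
    push_neg at hcon
    nlinarith
  exact abs_le_one_iff_mul_self_le_one.mpr h3

/-- The derivatives of the Legendre basis polynomials are bounded by `j(j+1)/k`. -/
lemma Kd_abs_le (ht : t₀ < t₁) (hdeg : ∀ i, (K i).natDegree = i)
    (hval0 : ∀ i, (K i).eval t₀ = (-1 : ℝ) ^ i) (hval1 : ∀ i, (K i).eval t₁ = 1)
    (horth : ∀ i j, (∫ t in t₀..t₁, (K i).eval t * (K j).eval t) =
      if i = j then (t₁ - t₀) / (2 * (i : ℝ) + 1) else 0) (j : ℕ) :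
    ∀ t ∈ Set.Icc t₀ t₁, |(derivative (K j)).eval t| ≤ (j : ℝ) * ((j : ℝ) + 1) / (t₁ - t₀) := by
  have hk : (0 : ℝ) < t₁ - t₀ := by linarith
  rcases Nat.lt_or_ge j 2 with hj | hj
  · interval_cases j
    · rw [K_zero_eq hdeg hval1]; intro t _; simp
    · -- j = 1 : derivative is the constant 2/k
      have hd1 : (derivative (K 1)).natDegree = 0 := by
        have := Polynomial.natDegree_derivative_le (K 1)
        rw [hdeg] at this
        omega
      have hc : derivative (K 1) = C ((derivative (K 1)).coeff 0) :=
        Polynomial.eq_C_of_natDegree_eq_zero hd1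
      intro t _
      rw [hc]
      simp only [eval_C]
      have := K_deriv_left ht hdeg hval0 hval1 horth 1
      rw [hc] at this
      simp only [eval_C] at this
      rw [this]
      have h2 : ((-1 : ℝ)) ^ (1 + 1) = 1 := by norm_num
      rw [h2, one_mul, abs_of_nonneg (div_nonneg (by norm_num) (le_of_lt hk))]
  · set N : ℝ := (j : ℝ) * ((j : ℝ) + 1) with hN
    have hj2 : (2 : ℝ) ≤ (j : ℝ) := by exact_mod_cast hj
    have hN2 : 2 < N := by rw [hN]; nlinarith
    set Q := derivative (K j) with hQ
    have hode : derivative (wP t₀ t₁) * Q + wP t₀ t₁ * derivative Q = -(C N * K j) := by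
      have h := K_ode ht hdeg hval1 horth j
      rw [derivative_mul] at h
      rw [h, ← hN, map_neg, neg_mul]
    have hddw : derivative (derivative (wP t₀ t₁)) = -2 := by
      rw [wP_deriv]
      simp only [derivative_sub, derivative_add, derivative_C, derivative_mul, derivative_X,
        derivative_ofNat]
      ring
    have h₂ := congrArg derivative hode
    simp only [derivative_add, derivative_mul, derivative_neg, derivative_C, zero_mul,
      zero_add, hddw] at h₂
    rw [← hQ] at h₂
    set G := (C N - 2) * (Q * Q) + wP t₀ t₁ * (derivative Q * derivative Q) with hG
    have hdG : derivative G = -(3 * derivative (wP t₀ t₁)) * (derivative Q * derivative Q) := by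
      rw [hG]
      simp only [derivative_add, derivative_sub, derivative_mul, derivative_C, zero_mul,
        derivative_ofNat]
      linear_combination (2 * derivative Q) * h₂
    have hsign : ∀ t, (derivative G).eval t
        = (2 * t - (t₀ + t₁)) * (3 * ((derivative Q).eval t * (derivative Q).eval t)) := by
      intro t
      rw [hdG]
      simp only [eval_mul, eval_neg, wP_deriv, eval_sub, eval_add, eval_C, eval_X, eval_ofNat]
      ring
    have hbound := poly_le_max_endpoints ht G _
      (fun t => mul_nonneg (by norm_num) (mul_self_nonneg _)) hsign
    have hQl : Q.eval t₀ = (-1 : ℝ) ^ (j+1) * N / (t₁ - t₀) :=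
      K_deriv_left ht hdeg hval0 hval1 horth j
    have hQr : Q.eval t₁ = N / (t₁ - t₀) :=
      K_deriv_right ht hdeg hval1 horth j
    have hGt₀ : G.eval t₀ = (N - 2) * (N / (t₁ - t₀)) ^ 2 := by
      simp only [hG, eval_add, eval_mul, eval_sub, eval_C, wP_eval_left, zero_mul, add_zero,
        eval_ofNat, hQl]
      have h1 : (-1 : ℝ) ^ (j+1) * ((-1 : ℝ) ^ (j+1)) = 1 := by
        rw [← pow_add]
        exact Even.neg_one_pow ⟨j+1, rfl⟩
      linear_combination ((N - 2) * (N / (t₁ - t₀)) ^ 2) * h1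

    have hGt₁ : G.eval t₁ = (N - 2) * (N / (t₁ - t₀)) ^ 2 := by
      simp only [hG, eval_add, eval_mul, eval_sub, eval_C, wP_eval_right, zero_mul, add_zero,
        eval_ofNat, hQr]
      ring
    intro t htI
    have h1 : G.eval t ≤ (N - 2) * (N / (t₁ - t₀)) ^ 2 := by
      have := hbound t htI
      rw [hGt₀, hGt₁, max_self] at this
      exact this
    have h2 : (N - 2) * (Q.eval t * Q.eval t) ≤ G.eval t := by
      simp only [hG, eval_add, eval_mul, eval_sub, eval_C, eval_ofNat]
      have := mul_nonneg (wP_eval_nonneg t₀ t₁ htI)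
        (mul_self_nonneg ((derivative Q).eval t))
      linarith
    have h3 : Q.eval t * Q.eval t ≤ (N / (t₁ - t₀)) ^ 2 := by
      nlinarith
    have h4 : |Q.eval t| ≤ N / (t₁ - t₀) := by
      have h5 : (0 : ℝ) ≤ N / (t₁ - t₀) := by positivity
      nlinarith [abs_nonneg (Q.eval t), sq_abs (Q.eval t), abs_mul_abs_self (Q.eval t)]
    exact h4
end

section
variable {t₀ t₁ : ℝ} {K : ℕ → Polynomial ℝ}

lemma inn_dK_high (hdeg : ∀ i, (K i).natDegree = i) (hval1 : ∀ i, (K i).eval t₁ = 1)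
    (horth : ∀ i j, (∫ t in t₀..t₁, (K i).eval t * (K j).eval t) =
      if i = j then (t₁ - t₀) / (2 * (i : ℝ) + 1) else 0)
    {i j : ℕ} (hij : i ≤ j) :
    inn t₀ t₁ (derivative (K i)) (K j) = 0 := by
  rcases Nat.eq_zero_or_pos i with hi | hi
  · subst hi
    rw [K_zero_eq hdeg hval1]
    simp only [derivative_one]
    exact inn_zero_left t₀ t₁ _
  · refine low_orth hdeg hval1 horth (show i - 1 < j by omega) _ ?_
    have := Polynomial.natDegree_derivative_le (K i)
    rw [hdeg] at this
    exact this

lemma inn_dK_low (hdeg : ∀ i, (K i).natDegree = i)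
    (hval0 : ∀ i, (K i).eval t₀ = (-1 : ℝ) ^ i) (hval1 : ∀ i, (K i).eval t₁ = 1)
    (horth : ∀ i j, (∫ t in t₀..t₁, (K i).eval t * (K j).eval t) =
      if i = j then (t₁ - t₀) / (2 * (i : ℝ) + 1) else 0)
    {i j : ℕ} (hji : j < i) :
    inn t₀ t₁ (derivative (K i)) (K j) = 1 - (-1 : ℝ) ^ (i + j) := by
  have h := inn_deriv t₀ t₁ (K i) (K j)
  have h2 : inn t₀ t₁ (K i) (derivative (K j)) = 0 := by
    rw [inn_comm]
    exact inn_dK_high hdeg hval1 horth (le_of_lt hji)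
  rw [h2, add_zero, eval_mul, eval_mul, hval1 i, hval1 j, hval0 i, hval0 j] at h
  rw [h, pow_add]
  ring

lemma inn_Lop (ht : t₀ < t₁)
    (horth : ∀ i j, (∫ t in t₀..t₁, (K i).eval t * (K j).eval t) =
      if i = j then (t₁ - t₀) / (2 * (i : ℝ) + 1) else 0)
    (r : ℕ) (z : ℝ) {j : ℕ} (hjr : j ≤ r) :
    inn t₀ t₁ (Lop t₀ t₁ r K z) (K j) = z * (-1 : ℝ) ^ j := by
  unfold Lop
  rw [inn_C_mul_left, inn_sum_left]
  have hcol : ∑ i ∈ Finset.range (r + 1),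
      inn t₀ t₁ (C ((-1 : ℝ) ^ i * (2 * (i : ℝ) + 1)) * K i) (K j)
      = (-1 : ℝ) ^ j * (2 * (j : ℝ) + 1) * ((t₁ - t₀) / (2 * (j : ℝ) + 1)) := by
    rw [Finset.sum_eq_single j]
    · rw [inn_C_mul_left]
      have := horth j j
      rw [if_pos rfl] at this
      rw [show inn t₀ t₁ (K j) (K j) = (t₁ - t₀) / (2 * (j:ℝ) + 1) from this]
    · intro i _ hij
      rw [inn_C_mul_left]
      have := horth i j
      rw [if_neg hij] at this
      rw [show inn t₀ t₁ (K i) (K j) = 0 from this, mul_zero]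
    · intro hj
      exact absurd (Finset.mem_range.mpr (by omega)) hj
  rw [hcol]
  have h1 : (2 * (j : ℝ) + 1) ≠ 0 := by positivity
  have h2 : t₁ - t₀ ≠ 0 := by linarith
  field_simp

end


/-- Stability of the dG fundamental solution: `0 < ψ(t₀) < 1`,
`max_{[t₀,t₁]} |ψ| = ψ(t₀)`, and `max_{[t₀,t₁]} |ψ'| = -ψ'(t₀)`. -/
theorem stmt_9 (t₀ t₁ : ℝ) (ht : t₀ < t₁) (r : ℕ) (K : ℕ → Polynomial ℝ)
    (hK : IsLegendreBasis t₀ t₁ K) (lam : ℝ) (hlam : 0 < lam)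
    (ψ : Polynomial ℝ) (hψdeg : ψ.natDegree ≤ r)
    (hψ : Gam t₀ t₁ r K lam ψ = Lop t₀ t₁ r K 1) :
    (0 < ψ.eval t₀ ∧ ψ.eval t₀ < 1) ∧
    IsGreatest ((fun t => |ψ.eval t|) '' Set.Icc t₀ t₁) (ψ.eval t₀) ∧
    IsGreatest ((fun t => |(Polynomial.derivative ψ).eval t|) '' Set.Icc t₀ t₁)
      (-(Polynomial.derivative ψ).eval t₀) := by
  obtain ⟨hdeg, hval1, hval0, horth⟩ := hK
  have hk : (0 : ℝ) < t₁ - t₀ := by linarith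
  obtain ⟨a, ha⟩ := exists_rep hdeg hval1 r ψ hψdeg
  -- the derivative expansion
  have hda : derivative ψ = ∑ i ∈ Finset.range (r + 1), C (a i) * derivative (K i) := by
    rw [ha, derivative_sum]
    exact Finset.sum_congr rfl (fun i _ => Polynomial.derivative_C_mul _ _)
  -- value at t₀
  have hψ0 : ψ.eval t₀ = ∑ i ∈ Finset.range (r + 1), (-1 : ℝ) ^ i * a i := by
    rw [ha, Polynomial.eval_finset_sum]
    refine Finset.sum_congr rfl (fun i _ => ?_)
    rw [eval_mul, eval_C, hval0 i]
    ring
  -- the coefficient equations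
  have heq : ∀ j, j ≤ r →
      lam * ((t₁ - t₀) / (2 * (j : ℝ) + 1)) * ((-1 : ℝ) ^ j * a j)
        = (1 - ψ.eval t₀) + ∑ i ∈ Finset.range (r + 1),
            (if j < i then (1 - (-1 : ℝ) ^ (i + j)) else 0) * ((-1 : ℝ) ^ i * a i) := by
    intro j hjr
    have h := congrArg (fun p => inn t₀ t₁ p (K j)) hψ
    simp only [Gam] at h
    rw [inn_add_left, inn_add_left, inn_Lop ht horth r (ψ.eval t₀) hjr,
      inn_C_mul_left, inn_Lop ht horth r 1 hjr] at h
    have h1 : inn t₀ t₁ (derivative ψ) (K j)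
        = ∑ i ∈ Finset.range (r + 1),
            a i * (if j < i then (1 - (-1 : ℝ) ^ (i + j)) else 0) := by
      rw [hda, inn_sum_left]
      refine Finset.sum_congr rfl (fun i _ => ?_)
      rw [inn_C_mul_left]
      by_cases hij : j < i
      · rw [if_pos hij, inn_dK_low hdeg hval0 hval1 horth hij]
      · rw [if_neg hij, inn_dK_high hdeg hval1 horth (by omega), mul_zero]
    have h2 : inn t₀ t₁ ψ (K j) = a j * ((t₁ - t₀) / (2 * (j : ℝ) + 1)) := by
      rw [ha, inn_sum_left]
      rw [Finset.sum_eq_single j]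
      · rw [inn_C_mul_left]
        have := horth j j
        rw [if_pos rfl] at this
        rw [show inn t₀ t₁ (K j) (K j) = (t₁ - t₀) / (2 * (j:ℝ) + 1) from this]
      · intro i _ hij
        rw [inn_C_mul_left]
        have := horth i j
        rw [if_neg hij] at this
        rw [show inn t₀ t₁ (K i) (K j) = 0 from this, mul_zero]
      · intro hj
        exact absurd (Finset.mem_range.mpr (by omega)) hj
    rw [h1, h2] at h
    -- flip signs in the sum
    have hsum : ∑ i ∈ Finset.range (r + 1),
        (if j < i then (1 - (-1 : ℝ) ^ (i + j)) else 0) * ((-1 : ℝ) ^ i * a i)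
        = -((-1 : ℝ) ^ j * ∑ i ∈ Finset.range (r + 1),
            a i * (if j < i then (1 - (-1 : ℝ) ^ (i + j)) else 0)) := by
      rw [Finset.mul_sum, ← Finset.sum_neg_distrib]
      refine Finset.sum_congr rfl (fun i _ => ?_)
      by_cases hij : j < i
      · rw [if_pos hij]
        have hii : (-1 : ℝ) ^ i * (-1 : ℝ) ^ i = 1 := by
          rw [← pow_add]; exact Even.neg_one_pow ⟨i, rfl⟩
        have hjj : (-1 : ℝ) ^ j * (-1 : ℝ) ^ j = 1 := by
          rw [← pow_add]; exact Even.neg_one_pow ⟨j, rfl⟩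
        have hadd : (-1 : ℝ) ^ (i + j) = (-1 : ℝ) ^ i * (-1 : ℝ) ^ j := pow_add _ _ _
        rw [hadd]
        linear_combination (-(a i * (-1:ℝ)^j)) * hii + (-(a i * (-1:ℝ)^i)) * hjj
      · rw [if_neg hij]
        ring
    have hjj : (-1 : ℝ) ^ j * (-1 : ℝ) ^ j = 1 := by
      rw [← pow_add]; exact Even.neg_one_pow ⟨j, rfl⟩
    rw [hsum]
    linear_combination ((-1 : ℝ) ^ j) * h + (1 - ψ.eval t₀) * hjj
  -- nonnegativity of the coupling coefficients
  have hcoef : ∀ i j : ℕ, 0 ≤ (if j < i then (1 - (-1 : ℝ) ^ (i + j)) else 0) := by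
    intro i j
    by_cases hij : j < i
    · rw [if_pos hij]
      rcases Nat.even_or_odd (i + j) with he | ho
      · rw [he.neg_one_pow]; norm_num
      · rw [ho.neg_one_pow]; norm_num
    · rw [if_neg hij]
  -- the downward induction
  have key : ∀ d : ℕ, ∀ j : ℕ, j ≤ r → r ≤ j + d →
      ((1 - ψ.eval t₀) ≠ 0 → 0 < (1 - ψ.eval t₀) * ((-1 : ℝ) ^ j * a j))
      ∧ ((1 - ψ.eval t₀) = 0 → (-1 : ℝ) ^ j * a j = 0) := by
    intro d
    induction d with
    | zero =>
      intro j hjr hrj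
      have hjr' : j = r := by omega
      have h := heq j hjr
      have hsz : ∑ i ∈ Finset.range (r + 1),
          (if j < i then (1 - (-1 : ℝ) ^ (i + j)) else 0) * ((-1 : ℝ) ^ i * a i) = 0 := by
        apply Finset.sum_eq_zero
        intro i hi
        rw [if_neg (by simp at hi; omega), zero_mul]
      rw [hsz, add_zero] at h
      have hκ : 0 < lam * ((t₁ - t₀) / (2 * (j : ℝ) + 1)) :=
        mul_pos hlam (div_pos hk (by positivity))
      constructor
      · intro hc
        have h3 : (lam * ((t₁ - t₀) / (2 * (j : ℝ) + 1)))
            * ((1 - ψ.eval t₀) * ((-1 : ℝ) ^ j * a j))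
            = (1 - ψ.eval t₀) * (1 - ψ.eval t₀) := by
          linear_combination (1 - ψ.eval t₀) * h
        have h4 : 0 < (1 - ψ.eval t₀) * (1 - ψ.eval t₀) := mul_self_pos.mpr hc
        nlinarith
      · intro hc
        rw [hc] at h
        exact (mul_eq_zero.mp h).resolve_left hκ.ne'
    | succ d ih =>
      intro j hjr hrj
      have h := heq j hjr
      have hκ : 0 < lam * ((t₁ - t₀) / (2 * (j : ℝ) + 1)) :=
        mul_pos hlam (div_pos hk (by positivity))
      constructor
      · intro hc
        have hS : 0 ≤ ∑ i ∈ Finset.range (r + 1),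
            (1 - ψ.eval t₀) * ((if j < i then (1 - (-1 : ℝ) ^ (i + j)) else 0)
              * ((-1 : ℝ) ^ i * a i)) := by
          apply Finset.sum_nonneg
          intro i hi
          by_cases hij : j < i
          · have hI := (ih i (by simp at hi; omega) (by omega)).1 hc
            calc (0:ℝ) = (if j < i then (1 - (-1 : ℝ) ^ (i + j)) else 0) * 0 := by ring
              _ ≤ _ := by
                rw [show (1 - ψ.eval t₀) * ((if j < i then (1 - (-1 : ℝ) ^ (i + j)) else 0)
                    * ((-1 : ℝ) ^ i * a i))
                    = (if j < i then (1 - (-1 : ℝ) ^ (i + j)) else 0)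
                      * ((1 - ψ.eval t₀) * ((-1 : ℝ) ^ i * a i)) by ring]
                exact mul_le_mul_of_nonneg_left (le_of_lt hI) (hcoef i j)
          · rw [if_neg hij, zero_mul, mul_zero]
        have h3 : (lam * ((t₁ - t₀) / (2 * (j : ℝ) + 1)))
            * ((1 - ψ.eval t₀) * ((-1 : ℝ) ^ j * a j))
            = (1 - ψ.eval t₀) * (1 - ψ.eval t₀)
              + ∑ i ∈ Finset.range (r + 1),
                (1 - ψ.eval t₀) * ((if j < i then (1 - (-1 : ℝ) ^ (i + j)) else 0)
                  * ((-1 : ℝ) ^ i * a i)) := by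
          rw [← Finset.mul_sum]
          linear_combination (1 - ψ.eval t₀) * h
        have h4 : 0 < (1 - ψ.eval t₀) * (1 - ψ.eval t₀) := mul_self_pos.mpr hc
        nlinarith
      · intro hc
        have hS : ∑ i ∈ Finset.range (r + 1),
            (if j < i then (1 - (-1 : ℝ) ^ (i + j)) else 0) * ((-1 : ℝ) ^ i * a i) = 0 := by
          apply Finset.sum_eq_zero
          intro i hi
          by_cases hij : j < i
          · rw [(ih i (by simp at hi; omega) (by omega)).2 hc, mul_zero]
          · rw [if_neg hij, zero_mul]
        rw [hS, add_zero, hc] at h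
        exact (mul_eq_zero.mp h).resolve_left hκ.ne' 
  -- the sign of 1 - ψ(t₀)
  have hcpos : 0 < 1 - ψ.eval t₀ := by
    rcases lt_trichotomy (1 - ψ.eval t₀) 0 with hneg | hzero | hpos
    · have hall : ∀ j, j ≤ r → (-1 : ℝ) ^ j * a j < 0 := by
        intro j hjr
        have := (key r j hjr (by omega)).1 (ne_of_lt hneg)
        nlinarith
      have hs : ψ.eval t₀ < 0 := by
        rw [hψ0]
        exact Finset.sum_neg (fun i hi => hall i (by simp at hi; omega)) ⟨0, by simp⟩
      linarith
    · have hall : ∀ j, j ≤ r → (-1 : ℝ) ^ j * a j = 0 :=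
        fun j hjr => (key r j hjr (by omega)).2 hzero
      have hs : ψ.eval t₀ = 0 := by
        rw [hψ0]
        exact Finset.sum_eq_zero (fun i hi => hall i (by simp at hi; omega))
      rw [hs] at hzero
      norm_num at hzero
    · exact hpos
  have hci : ∀ j, j ≤ r → 0 < (-1 : ℝ) ^ j * a j := by
    intro j hjr
    have := (key r j hjr (by omega)).1 (ne_of_gt hcpos)
    nlinarith
  -- claim 1
  have hψ0pos : 0 < ψ.eval t₀ := by
    rw [hψ0]
    exact Finset.sum_pos (fun i hi => hci i (by simp at hi; omega)) ⟨0, by simp⟩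
  have hψ0lt1 : ψ.eval t₀ < 1 := by linarith
  -- absolute values of the coefficients
  have habs_a : ∀ i, i ≤ r → |a i| = (-1 : ℝ) ^ i * a i := by
    intro i hir
    have h1 : |a i| = |(-1 : ℝ) ^ i * a i| := by
      rw [abs_mul, abs_pow, abs_neg, abs_one, one_pow, one_mul]
    rw [h1, abs_of_pos (hci i hir)]
  -- claim 2 : pointwise bound for ψ
  have hub : ∀ t ∈ Set.Icc t₀ t₁, |ψ.eval t| ≤ ψ.eval t₀ := by
    intro t htI
    have h1 : ψ.eval t = ∑ i ∈ Finset.range (r + 1), a i * (K i).eval t := by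
      rw [ha, Polynomial.eval_finset_sum]
      exact Finset.sum_congr rfl (fun i _ => by rw [eval_mul, eval_C])
    rw [h1, hψ0]
    calc |∑ i ∈ Finset.range (r + 1), a i * (K i).eval t|
        ≤ ∑ i ∈ Finset.range (r + 1), |a i * (K i).eval t| :=
          Finset.abs_sum_le_sum_abs _ _
      _ ≤ ∑ i ∈ Finset.range (r + 1), (-1 : ℝ) ^ i * a i := by
          apply Finset.sum_le_sum
          intro i hi
          rw [abs_mul, habs_a i (by simp at hi; omega)]
          have h2 := K_abs_le ht hdeg hval0 hval1 horth i t htI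
          have h3 := le_of_lt (hci i (by simp at hi; omega))
          calc ((-1 : ℝ) ^ i * a i) * |(K i).eval t| ≤ ((-1 : ℝ) ^ i * a i) * 1 :=
                mul_le_mul_of_nonneg_left h2 h3
            _ = (-1 : ℝ) ^ i * a i := mul_one _
  -- claim 3 : pointwise bound for ψ'
  have hd0 : (derivative ψ).eval t₀
      = -∑ i ∈ Finset.range (r + 1),
          ((-1 : ℝ) ^ i * a i) * ((i : ℝ) * ((i : ℝ) + 1) / (t₁ - t₀)) := by
    rw [hda, Polynomial.eval_finset_sum, ← Finset.sum_neg_distrib]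
    refine Finset.sum_congr rfl (fun i _ => ?_)
    rw [eval_mul, eval_C, K_deriv_left ht hdeg hval0 hval1 horth i, pow_succ]
    ring
  have hd0neg : (derivative ψ).eval t₀ ≤ 0 := by
    rw [hd0, neg_nonpos]
    apply Finset.sum_nonneg
    intro i hi
    apply mul_nonneg (le_of_lt (hci i (by simp at hi; omega)))
    positivity
  have hub3 : ∀ t ∈ Set.Icc t₀ t₁, |(derivative ψ).eval t| ≤ -(derivative ψ).eval t₀ := by
    intro t htI
    have h1 : (derivative ψ).eval t
        = ∑ i ∈ Finset.range (r + 1), a i * (derivative (K i)).eval t := by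
      rw [hda, Polynomial.eval_finset_sum]
      exact Finset.sum_congr rfl (fun i _ => by rw [eval_mul, eval_C])
    rw [h1, hd0, neg_neg]
    calc |∑ i ∈ Finset.range (r + 1), a i * (derivative (K i)).eval t|
        ≤ ∑ i ∈ Finset.range (r + 1), |a i * (derivative (K i)).eval t| :=
          Finset.abs_sum_le_sum_abs _ _
      _ ≤ ∑ i ∈ Finset.range (r + 1),
            ((-1 : ℝ) ^ i * a i) * ((i : ℝ) * ((i : ℝ) + 1) / (t₁ - t₀)) := by
          apply Finset.sum_le_sum
          intro i hi
          rw [abs_mul, habs_a i (by simp at hi; omega)]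
          have h2 := Kd_abs_le ht hdeg hval0 hval1 horth i t htI
          have h3 := le_of_lt (hci i (by simp at hi; omega))
          exact mul_le_mul_of_nonneg_left h2 h3
  refine ⟨⟨hψ0pos, hψ0lt1⟩, ⟨⟨t₀, ⟨le_refl _, le_of_lt ht⟩, abs_of_pos hψ0pos⟩, ?_⟩,
    ⟨⟨t₀, ⟨le_refl _, le_of_lt ht⟩, abs_of_nonpos hd0neg⟩, ?_⟩⟩
  · rintro y ⟨t, htI, rfl⟩
    exact hub t htI
  · rintro y ⟨t, htI, rfl⟩
    exact hub3 t htI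
end

section
/- Let λ > 0, let φ ∈ P^r satisfy φ' − λ φ − L̂(φ(t₁)) = L(1) on I, and let w, v ∈ P^r be such that Γ_λ(v) = w. Then for all t ∈ I, v(t) = −exp(−λ(t−t₀)) · (∫_I w(s) φ(s) ds) · η(t) + ∫_{t₀}^{t} exp(λ(s−t)) w(s) ds, where η(t) = 1 − ∫_{t₀}^{t} exp(λ(s−t₀)) L(1)(s) ds. -/
open Polynomial MeasureTheory intervalIntegral

lemma pint (p q : Polynomial ℝ) (a b : ℝ) :
    IntervalIntegrable (fun s => p.eval s * q.eval s) volume a b :=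
  (p.continuous.mul q.continuous).intervalIntegrable a b

-- generic: integral of (C c * ∑ C (a i) * K i) against K n
lemma sum_int (t₀ t₁ : ℝ) (ht : t₀ < t₁) (r : ℕ) (K : ℕ → Polynomial ℝ)
    (hK : IsLegendreBasis t₀ t₁ K) (c : ℝ) (a : ℕ → ℝ) (n : ℕ) (hn : n ≤ r) :
    (∫ s in t₀..t₁,
      (Polynomial.C c * ∑ i ∈ Finset.range (r + 1), Polynomial.C (a i) * K i).eval s
        * (K n).eval s)
    = c * a n * ((t₁ - t₀) / (2 * (n : ℝ) + 1)) := by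
  have heq : (fun s => (Polynomial.C c * ∑ i ∈ Finset.range (r + 1),
      Polynomial.C (a i) * K i).eval s * (K n).eval s)
      = fun s => ∑ i ∈ Finset.range (r + 1),
        (c * a i) * ((K i).eval s * (K n).eval s) := by
    funext s
    simp [Polynomial.eval_finset_sum, Finset.sum_mul, Finset.mul_sum]
    ring_nf
    apply Finset.sum_congr rfl
    intro i _
    ring
  rw [heq, intervalIntegral.integral_finset_sum]
  · have : ∀ i ∈ Finset.range (r+1),
        (∫ s in t₀..t₁, (c * a i) * ((K i).eval s * (K n).eval s))
        = (c * a i) * (if i = n then (t₁ - t₀) / (2 * (i:ℝ) + 1) else 0) := by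
      intro i _
      rw [intervalIntegral.integral_const_mul, hK.2.2.2 i n]
    rw [Finset.sum_congr rfl this]
    rw [Finset.sum_eq_single n]
    · simp
    · intro i _ hi; simp [hi]
    · intro h; exact absurd (Finset.mem_range.mpr (Nat.lt_succ_of_le hn)) h
  · intro i _
    exact ((continuous_const.mul ((K i).continuous.mul
      (K n).continuous))).intervalIntegrable _ _

lemma lift_basis (t₀ t₁ : ℝ) (ht : t₀ < t₁) (r : ℕ) (K : ℕ → Polynomial ℝ)
    (hK : IsLegendreBasis t₀ t₁ K) (n : ℕ) (hn : n ≤ r) :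
    (∫ s in t₀..t₁, (Lop t₀ t₁ r K 1).eval s * (K n).eval s) = (K n).eval t₀ ∧
    (∫ s in t₀..t₁, (LopE t₀ t₁ r K 1).eval s * (K n).eval s) = (K n).eval t₁ := by
  have hk : t₁ - t₀ ≠ 0 := by linarith
  have h2n : (2 * (n:ℝ) + 1) ≠ 0 := by positivity
  constructor
  · rw [Lop, sum_int t₀ t₁ ht r K hK _ _ n hn, hK.2.2.1 n]
    field_simp
  · rw [LopE, sum_int t₀ t₁ ht r K hK _ _ n hn, hK.2.1 n]
    field_simp

lemma lift_prop (t₀ t₁ : ℝ) (ht : t₀ < t₁) (r : ℕ) (K : ℕ → Polynomial ℝ)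
    (hK : IsLegendreBasis t₀ t₁ K) :
    ∀ n, n ≤ r → ∀ V : Polynomial ℝ, V.natDegree ≤ n →
    (∫ s in t₀..t₁, (Lop t₀ t₁ r K 1).eval s * V.eval s) = V.eval t₀ ∧
    (∫ s in t₀..t₁, (LopE t₀ t₁ r K 1).eval s * V.eval s) = V.eval t₁ := by
  intro n
  induction n using Nat.strong_induction_on with
  | _ n ih =>
    intro hn V hV
    have hKn0 : (K n).coeff n ≠ 0 := by
      intro h
      have : (K n).natDegree = n := hK.1 n
      have hKne : K n ≠ 0 := by
        intro h0; have := hK.2.1 n; rw [h0] at this; simp at this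
      exact (Polynomial.leadingCoeff_ne_zero.mpr hKne) (by rwa [Polynomial.leadingCoeff, this])
    set c : ℝ := V.coeff n / (K n).coeff n with hc
    set V' : Polynomial ℝ := V - Polynomial.C c * K n with hV'def
    have hVeq : V = Polynomial.C c * K n + V' := by rw [hV'def]; ring
    have hV'coeff : V'.coeff n = 0 := by
      simp [hV'def, hc, div_mul_cancel₀ _ hKn0]
    have hV'deg : V'.natDegree ≤ n := by
      apply le_trans (Polynomial.natDegree_sub_le _ _)
      simp only [max_le_iff]
      refine ⟨hV, le_trans (Polynomial.natDegree_mul_le) ?_⟩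
      simp [hK.1 n]
    have hprop : (∫ s in t₀..t₁, (Lop t₀ t₁ r K 1).eval s * V'.eval s) = V'.eval t₀ ∧
        (∫ s in t₀..t₁, (LopE t₀ t₁ r K 1).eval s * V'.eval s) = V'.eval t₁ := by
      rcases Nat.eq_zero_or_pos n with h0 | hpos
      · subst h0
        have hz : V' = 0 := by
          have h1 := Polynomial.eq_C_of_natDegree_le_zero hV'deg
          rw [h1, hV'coeff, map_zero]
        simp [hz]
      · have : V'.natDegree ≤ n - 1 := by
          rw [Polynomial.natDegree_le_iff_coeff_eq_zero]
          intro N hN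
          rcases Nat.lt_or_ge n N with hn2 | hn2
          · exact Polynomial.coeff_eq_zero_of_natDegree_lt (lt_of_le_of_lt hV'deg hn2)
          · have : N = n := le_antisymm hn2 (Nat.le_of_pred_lt hN)
            rw [this]; exact hV'coeff
        exact ih (n-1) (Nat.sub_lt hpos one_pos) (le_trans (Nat.sub_le n 1) hn) V' this
    have hbasis := lift_basis t₀ t₁ ht r K hK n hn
    have hint1 : ∀ (P : Polynomial ℝ),
        (∫ s in t₀..t₁, P.eval s * V.eval s)
        = c * (∫ s in t₀..t₁, P.eval s * (K n).eval s)
          + ∫ s in t₀..t₁, P.eval s * V'.eval s := by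
      intro P
      have : (fun s => P.eval s * V.eval s)
          = fun s => c * (P.eval s * (K n).eval s) + P.eval s * V'.eval s := by
        funext s; rw [hVeq]; simp; ring
      have h1 : IntervalIntegrable (fun s => c * (P.eval s * (K n).eval s)) volume t₀ t₁ :=
        (continuous_const.mul (P.continuous.mul (K n).continuous)).intervalIntegrable _ _
      rw [this, intervalIntegral.integral_add h1 (pint P V' t₀ t₁),
        intervalIntegral.integral_const_mul]
    constructor
    · rw [hint1, hbasis.1, hprop.1, hVeq]; simp
    · rw [hint1, hbasis.2, hprop.2, hVeq]; simp

lemma Lop_smul (t₀ t₁ : ℝ) (r : ℕ) (K : ℕ → Polynomial ℝ) (z : ℝ) :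
    Lop t₀ t₁ r K z = Polynomial.C z * Lop t₀ t₁ r K 1 := by
  rw [Lop, Lop, ← mul_assoc, ← map_mul, mul_one_div]

lemma LopE_smul (t₀ t₁ : ℝ) (r : ℕ) (K : ℕ → Polynomial ℝ) (z : ℝ) :
    LopE t₀ t₁ r K z = Polynomial.C z * LopE t₀ t₁ r K 1 := by
  rw [LopE, LopE, ← mul_assoc, ← map_mul, mul_one_div]

/-- The representation formula for `(Γ_λ)⁻¹`:
`v(t) = -exp(-λ(t-t₀)) (∫_I w φ) η(t) + ∫_{t₀}^t exp(λ(s-t)) w(s) ds`, where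
`η(t) = 1 - ∫_{t₀}^t exp(λ(s-t₀)) L(1)(s) ds`. -/
theorem stmt_10 (t₀ t₁ : ℝ) (ht : t₀ < t₁) (r : ℕ) (K : ℕ → Polynomial ℝ)
    (hK : IsLegendreBasis t₀ t₁ K) (lam : ℝ) (hlam : 0 < lam)
    (φ : Polynomial ℝ) (hφdeg : φ.natDegree ≤ r)
    (hφ : Polynomial.derivative φ - Polynomial.C lam * φ - LopE t₀ t₁ r K (φ.eval t₁)
      = Lop t₀ t₁ r K 1)
    (w v : Polynomial ℝ) (hw : w.natDegree ≤ r) (hv : v.natDegree ≤ r)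
    (hΓ : Gam t₀ t₁ r K lam v = w) :
    ∀ t ∈ Set.Ioc t₀ t₁,
      v.eval t = -Real.exp (-lam * (t - t₀)) * (∫ s in t₀..t₁, w.eval s * φ.eval s) *
          (1 - ∫ s in t₀..t, Real.exp (lam * (s - t₀)) * (Lop t₀ t₁ r K 1).eval s)
        + ∫ s in t₀..t, Real.exp (lam * (s - t)) * w.eval s := by
  intro t htI
  set L1 : Polynomial ℝ := Lop t₀ t₁ r K 1 with hL1
  set LE1 : Polynomial ℝ := LopE t₀ t₁ r K 1 with hLE1
  have hliftφ := lift_prop t₀ t₁ ht r K hK r le_rfl φ hφdeg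
  have hliftv := lift_prop t₀ t₁ ht r K hK r le_rfl v hv
  -- pointwise formula for w
  have hw_eval : ∀ s, w.eval s = (Polynomial.derivative v).eval s
      + v.eval t₀ * L1.eval s + lam * v.eval s := by
    intro s
    rw [← hΓ]
    simp [Gam, Lop_smul t₀ t₁ r K (v.eval t₀), hL1]
  -- pointwise formula for derivative φ
  have hφ_eval : ∀ s, (Polynomial.derivative φ).eval s
      = lam * φ.eval s + φ.eval t₁ * LE1.eval s + L1.eval s := by
    intro s
    have h := hφ
    rw [LopE_smul t₀ t₁ r K (φ.eval t₁), sub_sub, sub_eq_iff_eq_add] at h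
    rw [h]
    simp [hL1, hLE1]
    ring
  -- integration by parts
  have hibp : (∫ s in t₀..t₁, (Polynomial.derivative v).eval s * φ.eval s)
      = v.eval t₁ * φ.eval t₁ - v.eval t₀ * φ.eval t₀
        - ∫ s in t₀..t₁, v.eval s * (Polynomial.derivative φ).eval s := by
    have h1 : (∫ s in t₀..t₁, (Polynomial.derivative (v * φ)).eval s)
        = (v * φ).eval t₁ - (v * φ).eval t₀ :=
      intervalIntegral.integral_eq_sub_of_hasDerivAt
        (fun x _ => Polynomial.hasDerivAt (v * φ) x)
        ((Polynomial.derivative (v * φ)).continuous.intervalIntegrable _ _)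
    have h2 : (fun s => (Polynomial.derivative (v * φ)).eval s)
        = fun s => (Polynomial.derivative v).eval s * φ.eval s
          + v.eval s * (Polynomial.derivative φ).eval s := by
      funext s; rw [Polynomial.derivative_mul]; simp
    rw [h2, intervalIntegral.integral_add (pint _ _ _ _) (pint _ _ _ _)] at h1
    simp only [Polynomial.eval_mul] at h1
    linarith
  -- ∫ v * φ'
  have hvdφ : (∫ s in t₀..t₁, v.eval s * (Polynomial.derivative φ).eval s)
      = lam * (∫ s in t₀..t₁, v.eval s * φ.eval s)
        + φ.eval t₁ * v.eval t₁ + v.eval t₀ := by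
    have h2 : (fun s => v.eval s * (Polynomial.derivative φ).eval s)
        = fun s => lam * (v.eval s * φ.eval s)
          + (φ.eval t₁ * (LE1.eval s * v.eval s) + L1.eval s * v.eval s) := by
      funext s; rw [hφ_eval s]; ring
    rw [h2, intervalIntegral.integral_add (f := fun s => lam * (v.eval s * φ.eval s))
        (g := fun s => φ.eval t₁ * (LE1.eval s * v.eval s) + L1.eval s * v.eval s)
        ((continuous_const.mul (v.continuous.mul φ.continuous)).intervalIntegrable _ _)
        (((continuous_const.mul (LE1.continuous.mul v.continuous)).add
          (L1.continuous.mul v.continuous)).intervalIntegrable _ _),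
      intervalIntegral.integral_add (f := fun s => φ.eval t₁ * (LE1.eval s * v.eval s))
        (g := fun s => L1.eval s * v.eval s)
        ((continuous_const.mul (LE1.continuous.mul v.continuous)).intervalIntegrable _ _)
        ((L1.continuous.mul v.continuous).intervalIntegrable _ _),
      intervalIntegral.integral_const_mul, intervalIntegral.integral_const_mul,
      hliftv.1, hliftv.2]
    ring
  -- duality: ∫ w φ = - v(t₀)
  have hkey : (∫ s in t₀..t₁, w.eval s * φ.eval s) = - v.eval t₀ := by
    have h2 : (fun s => w.eval s * φ.eval s)
        = fun s => (Polynomial.derivative v).eval s * φ.eval s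
          + (v.eval t₀ * (L1.eval s * φ.eval s) + lam * (v.eval s * φ.eval s)) := by
      funext s; rw [hw_eval s]; ring
    rw [h2, intervalIntegral.integral_add (f := fun s => (Polynomial.derivative v).eval s * φ.eval s)
        (g := fun s => v.eval t₀ * (L1.eval s * φ.eval s) + lam * (v.eval s * φ.eval s))
        (pint _ _ _ _)
        (((continuous_const.mul (L1.continuous.mul φ.continuous)).add
          (continuous_const.mul (v.continuous.mul φ.continuous))).intervalIntegrable _ _),
      intervalIntegral.integral_add (f := fun s => v.eval t₀ * (L1.eval s * φ.eval s))
        (g := fun s => lam * (v.eval s * φ.eval s))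
        ((continuous_const.mul (L1.continuous.mul φ.continuous)).intervalIntegrable _ _)
        ((continuous_const.mul (v.continuous.mul φ.continuous)).intervalIntegrable _ _),
      intervalIntegral.integral_const_mul, intervalIntegral.integral_const_mul,
      hliftφ.1, hibp, hvdφ]
    ring
  -- ODE part
  have hderiv : ∀ s, HasDerivAt (fun u => Real.exp (lam * (u - t₀)) * v.eval u)
      (Real.exp (lam * (s - t₀)) * (w.eval s - v.eval t₀ * L1.eval s)) s := by
    intro s
    have h1 : HasDerivAt (fun u : ℝ => lam * (u - t₀)) lam s := by
      simpa using ((hasDerivAt_id s).sub_const t₀).const_mul lam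
    have h3 := h1.exp.mul (Polynomial.hasDerivAt v s)
    have h4 : Real.exp (lam * (s - t₀)) * (w.eval s - v.eval t₀ * L1.eval s)
        = Real.exp (lam * (s - t₀)) * lam * v.eval s
          + Real.exp (lam * (s - t₀)) * (Polynomial.derivative v).eval s := by
      rw [hw_eval s]
      ring
    rw [h4]; exact h3
  have hODE : (∫ s in t₀..t, Real.exp (lam * (s - t₀)) * (w.eval s - v.eval t₀ * L1.eval s))
      = Real.exp (lam * (t - t₀)) * v.eval t - v.eval t₀ := by
    have := intervalIntegral.integral_eq_sub_of_hasDerivAt (a := t₀) (b := t)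
      (fun x _ => hderiv x)
      (((Real.continuous_exp.comp (continuous_const.mul (continuous_id.sub continuous_const))).mul
        (w.continuous.sub (continuous_const.mul L1.continuous))).intervalIntegrable _ _)
    rw [this]
    simp
  have hsplit : (∫ s in t₀..t, Real.exp (lam * (s - t₀)) * (w.eval s - v.eval t₀ * L1.eval s))
      = (∫ s in t₀..t, Real.exp (lam * (s - t₀)) * w.eval s)
        - v.eval t₀ * ∫ s in t₀..t, Real.exp (lam * (s - t₀)) * L1.eval s := by
    have h2 : (fun s => Real.exp (lam * (s - t₀)) * (w.eval s - v.eval t₀ * L1.eval s))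
        = fun s => Real.exp (lam * (s - t₀)) * w.eval s
          - v.eval t₀ * (Real.exp (lam * (s - t₀)) * L1.eval s) := by
      funext s; ring
    have hc1 : IntervalIntegrable (fun s => Real.exp (lam * (s - t₀)) * w.eval s) volume t₀ t :=
      ((Real.continuous_exp.comp (continuous_const.mul (continuous_id.sub continuous_const))).mul
        w.continuous).intervalIntegrable _ _
    have hc2 : IntervalIntegrable
        (fun s => v.eval t₀ * (Real.exp (lam * (s - t₀)) * L1.eval s)) volume t₀ t :=
      (continuous_const.mul
        ((Real.continuous_exp.comp (continuous_const.mul (continuous_id.sub continuous_const))).mul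
        L1.continuous)).intervalIntegrable _ _
    rw [h2, intervalIntegral.integral_sub hc1 hc2, intervalIntegral.integral_const_mul]
  have hwint : (∫ s in t₀..t, Real.exp (lam * (s - t)) * w.eval s)
      = Real.exp (-lam * (t - t₀)) * ∫ s in t₀..t, Real.exp (lam * (s - t₀)) * w.eval s := by
    rw [← intervalIntegral.integral_const_mul]
    congr 1
    funext s
    rw [← mul_assoc, ← Real.exp_add]
    congr 2
    ring
  have hEE : Real.exp (-lam * (t - t₀)) * Real.exp (lam * (t - t₀)) = 1 := by
    rw [← Real.exp_add]; ring_nf; exact Real.exp_zero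
  have hfin : v.eval t = Real.exp (-lam * (t - t₀)) *
      (v.eval t₀ + (∫ s in t₀..t, Real.exp (lam * (s - t₀)) * w.eval s)
        - v.eval t₀ * ∫ s in t₀..t, Real.exp (lam * (s - t₀)) * L1.eval s) := by
    have h := hODE
    rw [hsplit] at h
    have : v.eval t = (Real.exp (-lam * (t - t₀)) * Real.exp (lam * (t - t₀))) * v.eval t := by
      rw [hEE, one_mul]
    rw [this]
    linear_combination (-Real.exp (-lam * (t - t₀))) * h
  rw [hkey, hwint, hfin]
  ring
end

section
/- Let λ > 0, let ψ ∈ P^r satisfy Γ_λ(ψ) = L(1), let φ ∈ P^r satisfy φ' − λ φ − L̂(φ(t₁)) = L(1) on I, and define e(t) = exp(−λ(t−t₀)) − ψ(t). Then for all w, v ∈ P^r with Γ_λ(v) = w and all t ∈ I, v(t) = −(e(t)/e(t₀)) · ∫_I w(s) φ(s) ds + ∫_{t₀}^{t} exp(λ(s−t)) w(s) ds. -/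
open Polynomial MeasureTheory intervalIntegral

/-- The dG error function `e(t) = exp(-λ (t - t₀)) - ψ(t)`. -/
noncomputable def errF (t₀ lam : ℝ) (ψ : Polynomial ℝ) (t : ℝ) : ℝ :=
  Real.exp (-lam * (t - t₀)) - ψ.eval t


lemma aux_poly_zero (lam : ℝ) (hlam : lam ≠ 0) (p : Polynomial ℝ)
    (h : Polynomial.derivative p + Polynomial.C lam * p = 0) : p = 0 := by
  by_contra hp
  have h1 : (Polynomial.derivative p + Polynomial.C lam * p).coeff p.natDegree = 0 := by
    rw [h]; simp
  rw [Polynomial.coeff_add, Polynomial.coeff_C_mul, Polynomial.coeff_derivative] at h1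
  have h2 : p.coeff (p.natDegree + 1) = 0 :=
    Polynomial.coeff_eq_zero_of_natDegree_lt (by omega)
  rw [h2] at h1
  simp at h1
  rcases h1 with h1 | h1
  · exact hlam h1
  · exact hp h1

lemma span_mem (K : ℕ → Polynomial ℝ) (hdeg : ∀ i, (K i).natDegree = i)
    (hKne : ∀ i, K i ≠ 0) (r : ℕ) :
    ∀ n, ∀ V : Polynomial ℝ, V.natDegree ≤ n → n ≤ r →
      V ∈ Submodule.span ℝ (K '' Set.Iic r) := by
  intro n
  induction n using Nat.strong_induction_on with
  | _ n IH =>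
    intro V hVn hnr
    by_cases hV0 : V = 0
    · simp [hV0]
    set d := V.natDegree with hd
    set c := V.leadingCoeff / (K d).leadingCoeff with hc
    have hKd : (K d).leadingCoeff ≠ 0 := Polynomial.leadingCoeff_ne_zero.mpr (hKne d)
    have hKmem : K d ∈ K '' Set.Iic r := ⟨d, by simp only [Set.mem_Iic]; omega, rfl⟩
    set W := V - Polynomial.C c * K d with hW
    have hcoeff : W.coeff d = 0 := by
      have : (Polynomial.C c * K d).coeff d = c * (K d).leadingCoeff := by
        rw [Polynomial.coeff_C_mul, Polynomial.leadingCoeff, hdeg]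
      rw [hW, Polynomial.coeff_sub, this, hc, div_mul_cancel₀ _ hKd,
        Polynomial.leadingCoeff, ← hd, sub_self]
    have hWle : W.natDegree ≤ d := by
      apply le_trans (Polynomial.natDegree_sub_le _ _)
      simp only [max_le_iff]
      exact ⟨le_refl _, le_trans (Polynomial.natDegree_C_mul_le _ _) (le_of_eq (hdeg d))⟩
    have hWmem : W ∈ Submodule.span ℝ (K '' Set.Iic r) := by
      by_cases hW0 : W = 0
      · simp [hW0]
      have hWlt : W.natDegree < d := by
        rcases lt_or_eq_of_le hWle with h | h
        · exact h
        · exfalso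
          apply hW0
          apply Polynomial.leadingCoeff_eq_zero.mp
          rw [Polynomial.leadingCoeff, h, hcoeff]
      exact IH W.natDegree (lt_of_lt_of_le hWlt hVn) W (le_refl _)
        (le_trans (le_of_lt (lt_of_lt_of_le hWlt hVn)) hnr)
    have : V = W + Polynomial.C c * K d := by ring
    rw [this]
    refine Submodule.add_mem _ hWmem ?_
    have := Submodule.smul_mem (Submodule.span ℝ (K '' Set.Iic r)) c
      (Submodule.subset_span hKmem)
    rwa [Polynomial.smul_eq_C_mul] at this

lemma polmul_intInt (p q : Polynomial ℝ) (a b : ℝ) :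
    IntervalIntegrable (fun t => p.eval t * q.eval t) volume a b :=
  (p.continuous.mul q.continuous).intervalIntegrable a b

lemma lift_integral (t₀ t₁ : ℝ) (ht : t₀ < t₁) (r : ℕ) (K : ℕ → Polynomial ℝ)
    (hK : IsLegendreBasis t₀ t₁ K) (b : ℕ → ℝ) (z p : ℝ)
    (hb : ∀ i, b i = (K i).eval p)
    (span_mem : ∀ V : Polynomial ℝ, V.natDegree ≤ r →
      V ∈ Submodule.span ℝ (K '' Set.Iic r)) :
    ∀ V : Polynomial ℝ, V.natDegree ≤ r →
      (∫ t in t₀..t₁,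
        (Polynomial.C (z / (t₁ - t₀)) *
          ∑ i ∈ Finset.range (r + 1), Polynomial.C (b i * (2 * (i:ℝ) + 1)) * K i).eval t
        * V.eval t) = z * V.eval p := by
  intro V hV
  set P : Polynomial ℝ := Polynomial.C (z / (t₁ - t₀)) *
    ∑ i ∈ Finset.range (r + 1), Polynomial.C (b i * (2 * (i:ℝ) + 1)) * K i with hP
  have hk : t₁ - t₀ ≠ 0 := sub_ne_zero.mpr (ne_of_gt ht)
  -- base case
  have base : ∀ j, j ≤ r → (∫ t in t₀..t₁, P.eval t * (K j).eval t) = z * (K j).eval p := by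
    intro j hj
    have h1 : ∀ t : ℝ, P.eval t * (K j).eval t =
        ∑ i ∈ Finset.range (r + 1),
          (z / (t₁ - t₀) * (b i * (2 * (i:ℝ) + 1))) * ((K i).eval t * (K j).eval t) := by
      intro t
      rw [hP]
      simp only [Polynomial.eval_mul, Polynomial.eval_C, Polynomial.eval_finset_sum,
        Finset.sum_mul]
      rw [Finset.mul_sum, Finset.sum_mul]
      apply Finset.sum_congr rfl
      intro i _
      ring
    rw [intervalIntegral.integral_congr (fun t _ => h1 t)]
    rw [intervalIntegral.integral_finset_sum]
    · have h2 : ∀ i ∈ Finset.range (r + 1),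
          (∫ t in t₀..t₁, (z / (t₁ - t₀) * (b i * (2 * (i:ℝ) + 1)))
            * ((K i).eval t * (K j).eval t)) =
          if i = j then z * b j else 0 := by
        intro i _
        rw [intervalIntegral.integral_const_mul, hK.2.2.2 i j]
        split_ifs with hij
        · subst hij
          have h3 : (2 * (i:ℝ) + 1) ≠ 0 := by positivity
          field_simp
        · ring
      rw [Finset.sum_congr rfl h2, Finset.sum_ite_eq' (Finset.range (r+1)) j fun _ => z * b j]
      simp only [Finset.mem_range]
      rw [if_pos (by omega), hb j]
    · intro i _
      exact (continuous_const.mul ((K i).continuous.mul (K j).continuous)).intervalIntegrable _ _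
  -- span induction
  have hmem := span_mem V hV
  clear hV
  induction hmem using Submodule.span_induction with
  | mem x hx =>
    obtain ⟨j, hj, rfl⟩ := hx
    exact base j hj
  | zero => simp
  | add x y hx hy ihx ihy =>
    rw [Polynomial.eval_add]
    have : ∀ t : ℝ, P.eval t * (x + y).eval t = P.eval t * x.eval t + P.eval t * y.eval t := by
      intro t; rw [Polynomial.eval_add]; ring
    rw [intervalIntegral.integral_congr (fun t _ => this t),
      intervalIntegral.integral_add (polmul_intInt P x _ _) (polmul_intInt P y _ _),
      ihx, ihy]
    ring
  | smul a x hx ihx =>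
    have : ∀ t : ℝ, P.eval t * (a • x).eval t = a * (P.eval t * x.eval t) := by
      intro t; rw [Polynomial.eval_smul]; simp; ring
    rw [intervalIntegral.integral_congr (fun t _ => this t),
      intervalIntegral.integral_const_mul, ihx, Polynomial.eval_smul]
    simp; ring

lemma hsp_of (t₀ t₁ : ℝ) (K : ℕ → Polynomial ℝ) (hK : IsLegendreBasis t₀ t₁ K) (r : ℕ) :
    ∀ V : Polynomial ℝ, V.natDegree ≤ r → V ∈ Submodule.span ℝ (K '' Set.Iic r) := by
  intro V hV
  refine span_mem K hK.1 (fun i h0 => ?_) r r V hV le_rfl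
  have := hK.2.1 i
  rw [h0] at this
  simp at this

lemma Lop_integral (t₀ t₁ : ℝ) (ht : t₀ < t₁) (r : ℕ) (K : ℕ → Polynomial ℝ)
    (hK : IsLegendreBasis t₀ t₁ K) (z : ℝ) (V : Polynomial ℝ) (hV : V.natDegree ≤ r) :
    (∫ t in t₀..t₁, (Lop t₀ t₁ r K z).eval t * V.eval t) = z * V.eval t₀ := by
  have := lift_integral t₀ t₁ ht r K hK (fun i => (-1:ℝ)^i) z t₀
    (fun i => (hK.2.2.1 i).symm) (hsp_of t₀ t₁ K hK r) V hV
  simpa [Lop] using this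

lemma LopE_integral (t₀ t₁ : ℝ) (ht : t₀ < t₁) (r : ℕ) (K : ℕ → Polynomial ℝ)
    (hK : IsLegendreBasis t₀ t₁ K) (z : ℝ) (V : Polynomial ℝ) (hV : V.natDegree ≤ r) :
    (∫ t in t₀..t₁, (LopE t₀ t₁ r K z).eval t * V.eval t) = z * V.eval t₁ := by
  have := lift_integral t₀ t₁ ht r K hK (fun _ => (1:ℝ)) z t₁
    (fun i => (hK.2.1 i).symm) (hsp_of t₀ t₁ K hK r) V hV
  simpa [LopE] using this

lemma int_w_phi (t₀ t₁ : ℝ) (ht : t₀ < t₁) (r : ℕ) (K : ℕ → Polynomial ℝ)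
    (hK : IsLegendreBasis t₀ t₁ K) (lam : ℝ)
    (φ : Polynomial ℝ) (hφdeg : φ.natDegree ≤ r)
    (hφ : Polynomial.derivative φ - Polynomial.C lam * φ - LopE t₀ t₁ r K (φ.eval t₁)
      = Lop t₀ t₁ r K 1)
    (w v : Polynomial ℝ) (hv : v.natDegree ≤ r)
    (hveq : Gam t₀ t₁ r K lam v = w) :
    (∫ s in t₀..t₁, w.eval s * φ.eval s) = - v.eval t₀ := by
  have hw : w = Polynomial.derivative v + Lop t₀ t₁ r K (v.eval t₀) + Polynomial.C lam * v :=
    hveq.symm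
  have hφ' : Polynomial.derivative φ
      = Polynomial.C lam * φ + LopE t₀ t₁ r K (φ.eval t₁) + Lop t₀ t₁ r K 1 := by
    linear_combination hφ
  -- integrability facts
  have hInt1 : IntervalIntegrable (fun s => (Polynomial.derivative v).eval s * φ.eval s)
      volume t₀ t₁ := ((Polynomial.derivative v).continuous.mul φ.continuous).intervalIntegrable _ _
  have hInt2 : IntervalIntegrable (fun s => (Lop t₀ t₁ r K (v.eval t₀)).eval s * φ.eval s)
      volume t₀ t₁ :=
    ((Lop t₀ t₁ r K (v.eval t₀)).continuous.mul φ.continuous).intervalIntegrable _ _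
  have hInt3 : IntervalIntegrable (fun s => v.eval s * φ.eval s) volume t₀ t₁ :=
    (v.continuous.mul φ.continuous).intervalIntegrable _ _
  have hInt4 : IntervalIntegrable (fun s => v.eval s * (Polynomial.derivative φ).eval s)
      volume t₀ t₁ := (v.continuous.mul (Polynomial.derivative φ).continuous).intervalIntegrable _ _
  have hibp : (∫ s in t₀..t₁, ((Polynomial.derivative v).eval s * φ.eval s
        + v.eval s * (Polynomial.derivative φ).eval s))
      = v.eval t₁ * φ.eval t₁ - v.eval t₀ * φ.eval t₀ :=
    intervalIntegral.integral_deriv_mul_eq_sub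
      (fun x _ => v.hasDerivAt x) (fun x _ => φ.hasDerivAt x)
      ((Polynomial.derivative v).continuous.intervalIntegrable _ _)
      ((Polynomial.derivative φ).continuous.intervalIntegrable _ _)
  rw [intervalIntegral.integral_add hInt1 hInt4] at hibp
  have hI2 : (∫ s in t₀..t₁, (Lop t₀ t₁ r K (v.eval t₀)).eval s * φ.eval s)
      = v.eval t₀ * φ.eval t₀ := Lop_integral t₀ t₁ ht r K hK _ φ hφdeg
  have hI4 : (∫ s in t₀..t₁, v.eval s * (Polynomial.derivative φ).eval s)
      = lam * (∫ s in t₀..t₁, v.eval s * φ.eval s) + φ.eval t₁ * v.eval t₁ + v.eval t₀ := by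
    have h5 : ∀ s : ℝ, v.eval s * (Polynomial.derivative φ).eval s =
        (lam * (v.eval s * φ.eval s) + (LopE t₀ t₁ r K (φ.eval t₁)).eval s * v.eval s)
        + (Lop t₀ t₁ r K 1).eval s * v.eval s := by
      intro s
      rw [hφ']
      simp only [Polynomial.eval_add, Polynomial.eval_mul, Polynomial.eval_C]
      ring
    have hIa : IntervalIntegrable (fun s => lam * (v.eval s * φ.eval s)) volume t₀ t₁ :=
      (continuous_const.mul (v.continuous.mul φ.continuous)).intervalIntegrable _ _
    have hIb : IntervalIntegrable
        (fun s => (LopE t₀ t₁ r K (φ.eval t₁)).eval s * v.eval s) volume t₀ t₁ :=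
      ((LopE t₀ t₁ r K (φ.eval t₁)).continuous.mul v.continuous).intervalIntegrable _ _
    have hIc : IntervalIntegrable (fun s => (Lop t₀ t₁ r K 1).eval s * v.eval s) volume t₀ t₁ :=
      ((Lop t₀ t₁ r K 1).continuous.mul v.continuous).intervalIntegrable _ _
    rw [intervalIntegral.integral_congr (fun s _ => h5 s),
      intervalIntegral.integral_add (hIa.add hIb) hIc,
      intervalIntegral.integral_add hIa hIb,
      intervalIntegral.integral_const_mul,
      LopE_integral t₀ t₁ ht r K hK _ v hv,
      Lop_integral t₀ t₁ ht r K hK _ v hv]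
    ring
  have h6 : ∀ s : ℝ, w.eval s * φ.eval s =
      ((Polynomial.derivative v).eval s * φ.eval s
        + (Lop t₀ t₁ r K (v.eval t₀)).eval s * φ.eval s)
      + lam * (v.eval s * φ.eval s) := by
    intro s
    rw [hw]
    simp only [Polynomial.eval_add, Polynomial.eval_mul, Polynomial.eval_C]
    ring
  have hIa : IntervalIntegrable (fun s => lam * (v.eval s * φ.eval s)) volume t₀ t₁ :=
    (continuous_const.mul (v.continuous.mul φ.continuous)).intervalIntegrable _ _
  rw [intervalIntegral.integral_congr (fun s _ => h6 s),
    intervalIntegral.integral_add (hInt1.add hInt2) hIa,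
    intervalIntegral.integral_add hInt1 hInt2,
    intervalIntegral.integral_const_mul, hI2]
  linarith

lemma Lop_eval (t₀ t₁ : ℝ) (r : ℕ) (K : ℕ → Polynomial ℝ) (z s : ℝ) :
    (Lop t₀ t₁ r K z).eval s = z * (Lop t₀ t₁ r K 1).eval s := by
  simp only [Lop, Polynomial.eval_mul, Polynomial.eval_C]
  ring

/-- The representation formula
`v(t) = -(e(t)/e(t₀)) ∫_I w φ + ∫_{t₀}^t exp(λ(s-t)) w(s) ds` for `Γ_λ(v) = w`. -/
theorem stmt_12 (t₀ t₁ : ℝ) (ht : t₀ < t₁) (r : ℕ) (K : ℕ → Polynomial ℝ)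
    (hK : IsLegendreBasis t₀ t₁ K) (lam : ℝ) (hlam : 0 < lam)
    (ψ : Polynomial ℝ) (hψdeg : ψ.natDegree ≤ r)
    (hψ : Gam t₀ t₁ r K lam ψ = Lop t₀ t₁ r K 1)
    (φ : Polynomial ℝ) (hφdeg : φ.natDegree ≤ r)
    (hφ : Polynomial.derivative φ - Polynomial.C lam * φ - LopE t₀ t₁ r K (φ.eval t₁)
      = Lop t₀ t₁ r K 1) :
    ∀ w v : Polynomial ℝ, w.natDegree ≤ r → v.natDegree ≤ r →
      Gam t₀ t₁ r K lam v = w →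
      ∀ t ∈ Set.Ioc t₀ t₁,
        v.eval t = -(errF t₀ lam ψ t / errF t₀ lam ψ t₀) *
            (∫ s in t₀..t₁, w.eval s * φ.eval s)
          + ∫ s in t₀..t, Real.exp (lam * (s - t)) * w.eval s := by
  intro w v hwdeg hvdeg hveq t htI
  have he₀ : errF t₀ lam ψ t₀ = 1 - ψ.eval t₀ := by simp [errF]
  have hψ0 : ψ.eval t₀ ≠ 1 := by
    intro h
    have h1 : Polynomial.derivative ψ + Polynomial.C lam * ψ = 0 := by
      have h2 := hψ
      rw [Gam, h] at h2
      linear_combination h2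
    have h3 := aux_poly_zero lam (ne_of_gt hlam) ψ h1
    rw [h3] at h
    simp at h
  have he0ne : errF t₀ lam ψ t₀ ≠ 0 := by
    rw [he₀]; exact sub_ne_zero.mpr (fun h => hψ0 h.symm)
  set c := v.eval t₀ / errF t₀ lam ψ t₀ with hc
  have hce : c * (1 - ψ.eval t₀) = v.eval t₀ := by
    rw [hc, he₀]
    rw [he₀] at he0ne
    exact div_mul_cancel₀ _ he0ne
  have hvder : ∀ s : ℝ, (Polynomial.derivative v).eval s
      = w.eval s - v.eval t₀ * (Lop t₀ t₁ r K 1).eval s - lam * v.eval s := by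
    intro s
    have h := congrArg (Polynomial.eval s) hveq
    rw [Gam] at h
    simp only [Polynomial.eval_add, Polynomial.eval_mul, Polynomial.eval_C] at h
    rw [Lop_eval] at h
    linear_combination h
  have hψder : ∀ s : ℝ, (Polynomial.derivative ψ).eval s
      = (1 - ψ.eval t₀) * (Lop t₀ t₁ r K 1).eval s - lam * ψ.eval s := by
    intro s
    have h := congrArg (Polynomial.eval s) hψ
    rw [Gam] at h
    simp only [Polynomial.eval_add, Polynomial.eval_mul, Polynomial.eval_C] at h
    rw [Lop_eval t₀ t₁ r K (ψ.eval t₀) s] at h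
    linear_combination h
  set g : ℝ → ℝ := fun s => Real.exp (lam * (s - t₀)) * w.eval s with hg
  have hgc : Continuous g := by
    apply Continuous.mul _ w.continuous
    exact Real.continuous_exp.comp (by fun_prop)
  set f : ℝ → ℝ := fun s => Real.exp (lam * (s - t₀)) * v.eval s
    + c * (Real.exp (lam * (s - t₀)) * ψ.eval s) - ∫ x in t₀..s, g x with hf
  have hfd : ∀ s : ℝ, HasDerivAt f 0 s := by
    intro s
    have hE : HasDerivAt (fun u : ℝ => Real.exp (lam * (u - t₀)))
        (lam * Real.exp (lam * (s - t₀))) s := by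
      have h1 : HasDerivAt (fun u : ℝ => lam * (u - t₀)) lam s := by
        simpa using ((hasDerivAt_id s).sub_const t₀).const_mul lam
      simpa [mul_comm] using h1.exp
    have h1 := hE.mul (Polynomial.hasDerivAt v s)
    have h2 := (hE.mul (Polynomial.hasDerivAt ψ s)).const_mul c
    have h3 : HasDerivAt (fun u : ℝ => ∫ x in t₀..u, g x) (g s) s :=
      intervalIntegral.integral_hasDerivAt_right (hgc.intervalIntegrable _ _)
        (hgc.stronglyMeasurableAtFilter _ _) hgc.continuousAt
    have h4 := (h1.add h2).sub h3
    refine h4.congr_deriv ?_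
    symm
    rw [hvder s, hψder s, hg]
    simp only []
    linear_combination (-(Real.exp (lam * (s - t₀)) * (Lop t₀ t₁ r K 1).eval s)) * hce
  have hconst : f t = f t₀ :=
    is_const_of_deriv_eq_zero (fun x => (hfd x).differentiableAt)
      (fun x => (hfd x).deriv) t t₀
  have hft₀ : f t₀ = v.eval t₀ + c * ψ.eval t₀ := by
    simp [hf]
  rw [hft₀] at hconst
  have hIg : (∫ s in t₀..t, Real.exp (lam * (s - t)) * w.eval s)
      = Real.exp (-lam * (t - t₀)) * ∫ x in t₀..t, g x := by
    rw [← intervalIntegral.integral_const_mul]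
    apply intervalIntegral.integral_congr
    intro s _
    rw [hg]
    simp only []
    rw [← mul_assoc, ← Real.exp_add]
    ring_nf
  have hwφ := int_w_phi t₀ t₁ ht r K hK lam φ hφdeg hφ w v hvdeg hveq
  rw [hwφ, hIg]
  have hdiv : -(errF t₀ lam ψ t / errF t₀ lam ψ t₀) * (-(v.eval t₀))
      = c * errF t₀ lam ψ t := by
    rw [hc]
    field_simp
  rw [hdiv]
  have hEE : Real.exp (-lam * (t - t₀)) * Real.exp (lam * (t - t₀)) = 1 := by
    rw [← Real.exp_add]
    norm_num
  have hfexp : f t = Real.exp (lam * (t - t₀)) * v.eval t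
      + c * (Real.exp (lam * (t - t₀)) * ψ.eval t) - ∫ x in t₀..t, g x := rfl
  rw [hfexp] at hconst
  rw [errF]
  linear_combination Real.exp (-lam * (t - t₀)) * hconst
    - (v.eval t + c * ψ.eval t) * hEE - Real.exp (-lam * (t - t₀)) * hce
end

section
/- Let λ > 0, let ψ ∈ P^r satisfy Γ_λ(ψ) = L(1), and define e(t) = exp(−λ(t−t₀)) − ψ(t). Then for all w, v ∈ P^r with Γ_λ(v) = w, the L∞–L² stability estimate sup_{t∈I} |v(t)| ≤ C^{L²} · k^{1/2} · (∫_I w(t)² dt)^{1/2} holds, where C^{L²} = Υ(r, kλ) · sup_{t∈I} |e(t)/e(t₀)| + 1 and Υ(r, ϱ) = √(3/(2(2r+1)+ϱ)). -/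
open Polynomial MeasureTheory intervalIntegral

/-- `Υ(r, ϱ) = √(3 / (2 (2 r + 1) + ϱ))`. -/
noncomputable def Upsilon (r : ℕ) (ρ : ℝ) : ℝ :=
  Real.sqrt (3 / (2 * (2 * (r : ℝ) + 1) + ρ))

/-- The stability constant `C^{L²} = Υ(r, kλ) ⬝ sup_{t ∈ I} |e(t)/e(t₀)| + 1`. -/
noncomputable def CL2 (t₀ t₁ : ℝ) (r : ℕ) (lam : ℝ) (ψ : Polynomial ℝ) : ℝ :=
  Upsilon r ((t₁ - t₀) * lam) *
    (⨆ t ∈ Set.Ioc t₀ t₁, |errF t₀ lam ψ t / errF t₀ lam ψ t₀|) + 1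

/-- Cauchy–Schwarz for interval integrals of continuous functions. -/
lemma cs_int (f g : ℝ → ℝ) (hf : Continuous f) (hg : Continuous g) (x y : ℝ) (hxy : x ≤ y) :
    (∫ s in x..y, f s * g s)^2 ≤ (∫ s in x..y, (f s)^2) * (∫ s in x..y, (g s)^2) := by
  set a := ∫ s in x..y, (f s)^2 with ha
  set b := ∫ s in x..y, f s * g s with hb
  set c := ∫ s in x..y, (g s)^2 with hc
  have key : ∀ z : ℝ, 0 ≤ a * (z*z) + (2*b) * z + c := by
    intro z
    have h0 : 0 ≤ ∫ s in x..y, (z * f s + g s)^2 :=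
      intervalIntegral.integral_nonneg hxy (fun s _ => sq_nonneg _)
    have hexp : (∫ s in x..y, (z * f s + g s)^2) = a * (z*z) + (2*b) * z + c := by
      have h1 : (fun s => (z * f s + g s)^2)
          = fun s => (z*z)*(f s)^2 + ((2*z)*(f s * g s) + (g s)^2) := by
        funext s; ring
      rw [h1, intervalIntegral.integral_add, intervalIntegral.integral_add,
        intervalIntegral.integral_const_mul, intervalIntegral.integral_const_mul]
      · ring
      · exact (continuous_const.mul (hf.mul hg)).intervalIntegrable _ _
      · exact (hg.pow 2).intervalIntegrable _ _
      · exact (continuous_const.mul (hf.pow 2)).intervalIntegrable _ _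
      · exact ((continuous_const.mul (hf.mul hg)).add (hg.pow 2)).intervalIntegrable _ _
    linarith [hexp ▸ h0]
  have hd := discrim_le_zero key
  rw [discrim] at hd
  nlinarith [hd]

/-- FTC for polynomials. -/
lemma poly_ftc (q : Polynomial ℝ) (x y : ℝ) :
    ∫ t in x..y, (derivative q).eval t = q.eval y - q.eval x :=
  integral_eq_sub_of_hasDerivAt (fun t _ => q.hasDerivAt t)
    (((derivative q).continuous_aeval).intervalIntegrable _ _)

/-- Polynomials of degree ≤ n lie in the span of `K 0, …, K n`. -/
lemma span_aux (t₁ : ℝ) (K : ℕ → Polynomial ℝ) (hdeg : ∀ i, (K i).natDegree = i)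
    (hval : ∀ i, (K i).eval t₁ = 1) :
    ∀ n (q : Polynomial ℝ), q.natDegree ≤ n → q ∈ Submodule.span ℝ (K '' Set.Iic n) := by
  intro n
  induction n with
  | zero =>
    intro q hq
    have hK0 : K 0 = C ((K 0).coeff 0) := (K 0).eq_C_of_natDegree_le_zero (le_of_eq (hdeg 0))
    have hc : (K 0).coeff 0 = 1 := by
      have h := hval 0; rw [hK0] at h; simpa using h
    have hqq : q = q.coeff 0 • K 0 := by
      rw [hK0, hc]
      rw [q.eq_C_of_natDegree_le_zero hq]
      simp [smul_eq_C_mul]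
    rw [hqq]
    exact Submodule.smul_mem _ _ (Submodule.subset_span ⟨0, le_refl 0, rfl⟩)
  | succ n ih =>
    intro q hq
    have hKn : (K (n+1)).coeff (n+1) ≠ 0 := by
      have h1 : K (n+1) ≠ 0 := fun h => by simpa [h] using hval (n+1)
      have h2 := Polynomial.leadingCoeff_ne_zero.2 h1
      rwa [leadingCoeff, hdeg] at h2
    set c := q.coeff (n+1) / (K (n+1)).coeff (n+1) with hc
    have hsub : (q - C c * K (n+1)).natDegree ≤ n := by
      apply Polynomial.natDegree_le_iff_coeff_eq_zero.2
      intro m hm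
      rcases eq_or_lt_of_le (Nat.succ_le_of_lt hm) with h | h
      · rw [coeff_sub, coeff_C_mul, ← h, hc, div_mul_cancel₀ _ hKn, sub_self]
      · have hq' : q.coeff m = 0 := coeff_eq_zero_of_natDegree_lt (lt_of_le_of_lt hq h)
        have hK' : (K (n+1)).coeff m = 0 := coeff_eq_zero_of_natDegree_lt (by rw [hdeg]; exact h)
        simp [coeff_sub, coeff_C_mul, hq', hK']
    have heq : q = (q - C c * K (n+1)) + c • K (n+1) := by simp [smul_eq_C_mul]
    rw [heq]
    exact Submodule.add_mem _
      (Submodule.span_mono (Set.image_mono (Set.Iic_subset_Iic.2 (Nat.le_succ n))) (ih _ hsub))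
      (Submodule.smul_mem _ _ (Submodule.subset_span ⟨n+1, Set.self_mem_Iic, rfl⟩))

/-- Duhamel / integrating factor identity for polynomial ODEs. -/
lemma duhamel (t₀ lam : ℝ) (q h : Polynomial ℝ) (heq : derivative q + C lam * q = h) (t : ℝ) :
    Real.exp (lam*(t - t₀)) * q.eval t - q.eval t₀
      = ∫ s in t₀..t, Real.exp (lam*(s - t₀)) * h.eval s := by
  have hder : ∀ s : ℝ, HasDerivAt (fun u => Real.exp (lam*(u - t₀)) * q.eval u)
      (Real.exp (lam*(s - t₀)) * h.eval s) s := by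
    intro s
    have h1 : HasDerivAt (fun u : ℝ => lam*(u - t₀)) lam s := by
      simpa using ((hasDerivAt_id s).sub_const t₀).const_mul lam
    have h2 := (h1.exp).mul (q.hasDerivAt s)
    have h3 : h.eval s = (derivative q).eval s + lam * q.eval s := by
      rw [← heq]; simp
    rw [h3]; exact h2.congr_deriv (by ring)
  have hcont : Continuous (fun s => Real.exp (lam*(s - t₀)) * h.eval s) := by
    exact (Real.continuous_exp.comp (by continuity)).mul h.continuous_aeval
  have := intervalIntegral.integral_eq_sub_of_hasDerivAt (fun s _ => hder s)
    (hcont.intervalIntegrable t₀ t)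
  rw [this]; simp

lemma int_L_K (t₀ t₁ : ℝ) (ht : t₀ < t₁) (r : ℕ) (K : ℕ → Polynomial ℝ)
    (hK : IsLegendreBasis t₀ t₁ K) (i : ℕ) (hi : i ≤ r) :
    (∫ s in t₀..t₁, (Lop t₀ t₁ r K 1).eval s * (K i).eval s) = (-1 : ℝ)^i := by
  obtain ⟨hdeg, hval1, hval0, horth⟩ := hK
  have hk : t₁ - t₀ ≠ 0 := sub_ne_zero.2 ht.ne'
  have h1 : ∀ s : ℝ, (Lop t₀ t₁ r K 1).eval s * (K i).eval s
      = ∑ j ∈ Finset.range (r+1),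
          (1/(t₁-t₀) * ((-1:ℝ)^j * (2*(j:ℝ)+1))) * ((K j).eval s * (K i).eval s) := by
    intro s
    rw [Lop, eval_mul, eval_C, eval_finset_sum, Finset.mul_sum, Finset.sum_mul]
    exact Finset.sum_congr rfl (fun j _ => by rw [eval_mul, eval_C]; ring)
  rw [intervalIntegral.integral_congr (g := fun s => ∑ j ∈ Finset.range (r+1),
      (1/(t₁-t₀) * ((-1:ℝ)^j * (2*(j:ℝ)+1))) * ((K j).eval s * (K i).eval s))
      (fun s _ => h1 s)]
  have hint : ∀ j ∈ Finset.range (r+1), IntervalIntegrable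
      (fun s => (1/(t₁-t₀) * ((-1:ℝ)^j * (2*(j:ℝ)+1))) * ((K j).eval s * (K i).eval s))
      volume t₀ t₁ := fun j _ => (Continuous.intervalIntegrable (continuous_const.mul ((K j).continuous.mul (K i).continuous)) _ _)
  rw [intervalIntegral.integral_finset_sum hint]
  have h2 : ∀ j ∈ Finset.range (r+1),
      (∫ s in t₀..t₁, (1/(t₁-t₀) * ((-1:ℝ)^j * (2*(j:ℝ)+1))) * ((K j).eval s * (K i).eval s))
      = if j = i then (-1:ℝ)^i else 0 := by
    intro j _
    rw [intervalIntegral.integral_const_mul, horth j i]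
    by_cases h : j = i
    · subst h
      rw [if_pos rfl, if_pos rfl]
      have h21 : (2*(j:ℝ)+1) ≠ 0 := by positivity
      field_simp
    · rw [if_neg h, if_neg h, mul_zero]
  rw [Finset.sum_congr rfl h2, Finset.sum_ite_eq' (Finset.range (r+1)) i (fun _ => (-1:ℝ)^i),
    if_pos (Finset.mem_range.2 (Nat.lt_succ_of_le hi))]

lemma int_L_poly (t₀ t₁ : ℝ) (ht : t₀ < t₁) (r : ℕ) (K : ℕ → Polynomial ℝ)
    (hK : IsLegendreBasis t₀ t₁ K) (q : Polynomial ℝ) (hq : q.natDegree ≤ r) :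
    (∫ s in t₀..t₁, (Lop t₀ t₁ r K 1).eval s * q.eval s) = q.eval t₀ := by
  have hmem := span_aux t₁ K hK.1 hK.2.1 r q hq
  clear hq
  induction hmem using Submodule.span_induction with
  | mem p hp =>
    obtain ⟨i, hi, rfl⟩ := hp
    rw [int_L_K t₀ t₁ ht r K hK i hi, hK.2.2.1 i]
  | zero => simp
  | add p q hp hq ihp ihq =>
    have h1 : ∀ s : ℝ, (Lop t₀ t₁ r K 1).eval s * (p+q).eval s
        = (Lop t₀ t₁ r K 1).eval s * p.eval s + (Lop t₀ t₁ r K 1).eval s * q.eval s := by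
      intro s; rw [eval_add]; ring
    rw [intervalIntegral.integral_congr (fun s _ => h1 s), intervalIntegral.integral_add (f := fun s => (Lop t₀ t₁ r K 1).eval s * p.eval s)
      (g := fun s => (Lop t₀ t₁ r K 1).eval s * q.eval s)
      (Continuous.intervalIntegrable ((Lop t₀ t₁ r K 1).continuous.mul p.continuous) _ _)
      (Continuous.intervalIntegrable ((Lop t₀ t₁ r K 1).continuous.mul q.continuous) _ _),
      ihp, ihq, eval_add]
  | smul a p hp ihp =>
    have h1 : ∀ s : ℝ, (Lop t₀ t₁ r K 1).eval s * (a • p).eval s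
        = a * ((Lop t₀ t₁ r K 1).eval s * p.eval s) := by
      intro s; rw [eval_smul, smul_eq_mul]; ring
    rw [intervalIntegral.integral_congr (fun s _ => h1 s),
      intervalIntegral.integral_const_mul, ihp, eval_smul, smul_eq_mul]

lemma int_low_Kr (t₀ t₁ : ℝ) (r n : ℕ) (K : ℕ → Polynomial ℝ)
    (hK : IsLegendreBasis t₀ t₁ K) (hn : n < r) (q : Polynomial ℝ) (hq : q.natDegree ≤ n) :
    (∫ s in t₀..t₁, q.eval s * (K r).eval s) = 0 := by
  have hmem := span_aux t₁ K hK.1 hK.2.1 n q hq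
  clear hq
  induction hmem using Submodule.span_induction with
  | mem p hp =>
    obtain ⟨i, hi, rfl⟩ := hp
    rw [hK.2.2.2 i r, if_neg (by simp only [Set.mem_Iic] at hi; omega)]
  | zero => simp
  | add p q hp hq ihp ihq =>
    have h1 : ∀ s : ℝ, (p+q).eval s * (K r).eval s
        = p.eval s * (K r).eval s + q.eval s * (K r).eval s := by
      intro s; rw [eval_add]; ring
    rw [intervalIntegral.integral_congr (fun s _ => h1 s), intervalIntegral.integral_add (f := fun s => p.eval s * (K r).eval s) (g := fun s => q.eval s * (K r).eval s)
      (Continuous.intervalIntegrable (p.continuous.mul (K r).continuous) _ _)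
      (Continuous.intervalIntegrable (q.continuous.mul (K r).continuous) _ _),
      ihp, ihq, add_zero]
  | smul a p hp ihp =>
    have h1 : ∀ s : ℝ, (a • p).eval s * (K r).eval s
        = a * (p.eval s * (K r).eval s) := by
      intro s; rw [eval_smul, smul_eq_mul]; ring
    rw [intervalIntegral.integral_congr (fun s _ => h1 s),
      intervalIntegral.integral_const_mul, ihp, mul_zero]

set_option maxHeartbeats 1000000 in
/-- `L^∞`–`L²` stability of `(Γ_λ)⁻¹`:
`sup_I |v| ≤ C^{L²} k^{1/2} ‖w‖_{L²(I)}` whenever `Γ_λ(v) = w`. -/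
theorem stmt_13 (t₀ t₁ : ℝ) (ht : t₀ < t₁) (r : ℕ) (K : ℕ → Polynomial ℝ)
    (hK : IsLegendreBasis t₀ t₁ K) (lam : ℝ) (hlam : 0 < lam)
    (ψ : Polynomial ℝ) (hψdeg : ψ.natDegree ≤ r)
    (hψ : Gam t₀ t₁ r K lam ψ = Lop t₀ t₁ r K 1) :
    ∀ w v : Polynomial ℝ, w.natDegree ≤ r → v.natDegree ≤ r →
      Gam t₀ t₁ r K lam v = w →
      ∀ t ∈ Set.Ioc t₀ t₁,
        |v.eval t| ≤ CL2 t₀ t₁ r lam ψ * Real.sqrt (t₁ - t₀) *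
          Real.sqrt (∫ s in t₀..t₁, (w.eval s) ^ 2) := by
  intro w v hw hv hGam t htI
  obtain ⟨ht0t, htt1⟩ := htI
  have hk : 0 < t₁ - t₀ := sub_pos.2 ht
  set ℓ : ℝ → ℝ := fun s => (Lop t₀ t₁ r K 1).eval s with hℓ
  set v₀ := v.eval t₀ with hv₀def
  set W2 := ∫ s in t₀..t₁, (w.eval s)^2 with hW2def
  have hW2nn : 0 ≤ W2 := intervalIntegral.integral_nonneg ht.le (fun s _ => sq_nonneg _)
  have hLopz : ∀ z : ℝ, Lop t₀ t₁ r K z = C z * Lop t₀ t₁ r K 1 := by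
    intro z
    rw [Lop, Lop, ← mul_assoc, ← C_mul, mul_one_div]
  -- the source term decomposition w = p + lam • v
  set p : Polynomial ℝ := derivative v + Lop t₀ t₁ r K (v.eval t₀) with hpdef
  have hwp : w = p + C lam * v := by rw [hpdef, ← hGam, Gam]
  have hpe : ∀ s : ℝ, p.eval s = (derivative v).eval s + v₀ * ℓ s := by
    intro s; rw [hpdef, eval_add, hLopz (v.eval t₀), eval_mul, eval_C, hℓ, hv₀def]
  have hwe : ∀ s : ℝ, w.eval s = p.eval s + lam * v.eval s := by
    intro s; rw [hwp]; simp
  ------------------------------------------------------------------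
  -- Step 1 : the jump bound |v₀| ≤ Υ √k √W2
  ------------------------------------------------------------------
  have hvv : (∫ s in t₀..t₁, (derivative v).eval s * v.eval s)
      = (v.eval t₁^2 - v.eval t₀^2)/2 := by
    have h1 := poly_ftc (v*v) t₀ t₁
    have h2 : ∀ s : ℝ, (derivative (v*v)).eval s
        = 2*((derivative v).eval s * v.eval s) := by
      intro s; simp [derivative_mul]; ring
    rw [intervalIntegral.integral_congr (fun s _ => h2 s),
      intervalIntegral.integral_const_mul, eval_mul, eval_mul] at h1
    linarith [h1]
  have hℓv : (∫ s in t₀..t₁, ℓ s * v.eval s) = v₀ := int_L_poly t₀ t₁ ht r K hK v hv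
  have hEnergy : (∫ s in t₀..t₁, p.eval s * v.eval s) = v.eval t₁^2/2 + v₀^2/2 := by
    have hsplit : ∀ s : ℝ, p.eval s * v.eval s
        = (derivative v).eval s * v.eval s + v₀ * (ℓ s * v.eval s) := by
      intro s; rw [hpe s]; ring
    rw [intervalIntegral.integral_congr (fun s _ => hsplit s),
      intervalIntegral.integral_add (f := fun s => (derivative v).eval s * v.eval s)
          (g := fun s => v₀ * (ℓ s * v.eval s))
        (Continuous.intervalIntegrable ((derivative v).continuous.mul v.continuous) _ _)
        (Continuous.intervalIntegrable (continuous_const.mul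
          ((Lop t₀ t₁ r K 1).continuous.mul v.continuous)) _ _),
      hvv, intervalIntegral.integral_const_mul, hℓv]
    ring
  have hdvKr : (∫ s in t₀..t₁, (derivative v).eval s * (K r).eval s) = 0 := by
    rcases Nat.eq_zero_or_pos r with hr | hr
    · have hvC : v = C (v.coeff 0) := v.eq_C_of_natDegree_le_zero (hr ▸ hv)
      rw [hvC]; simp
    · exact int_low_Kr t₀ t₁ r (r-1) K hK (by omega) (derivative v)
        (le_trans (natDegree_derivative_le v) (by omega))
  have hℓKr : (∫ s in t₀..t₁, ℓ s * (K r).eval s) = (-1:ℝ)^r :=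
    int_L_K t₀ t₁ ht r K hK r le_rfl
  have hpKr : (∫ s in t₀..t₁, p.eval s * (K r).eval s) = v₀ * (-1:ℝ)^r := by
    have hsplit : ∀ s : ℝ, p.eval s * (K r).eval s
        = (derivative v).eval s * (K r).eval s + v₀ * (ℓ s * (K r).eval s) := by
      intro s; rw [hpe s]; ring
    rw [intervalIntegral.integral_congr (fun s _ => hsplit s),
      intervalIntegral.integral_add (f := fun s => (derivative v).eval s * (K r).eval s)
          (g := fun s => v₀ * (ℓ s * (K r).eval s))
        (Continuous.intervalIntegrable ((derivative v).continuous.mul (K r).continuous) _ _)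
        (Continuous.intervalIntegrable (continuous_const.mul
          ((Lop t₀ t₁ r K 1).continuous.mul (K r).continuous)) _ _),
      hdvKr, intervalIntegral.integral_const_mul, hℓKr, zero_add]
  have hKr2 : (∫ s in t₀..t₁, ((K r).eval s)^2) = (t₁-t₀)/(2*(r:ℝ)+1) := by
    have h := hK.2.2.2 r r
    rw [if_pos rfl] at h
    rw [← h]
    exact intervalIntegral.integral_congr (fun s _ => sq ((K r).eval s))
  have hCS := cs_int (fun s => p.eval s) (fun s => (K r).eval s)
    p.continuous (K r).continuous t₀ t₁ ht.le
  rw [hpKr, hKr2] at hCS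
  have hsq1 : (v₀ * (-1:ℝ)^r)^2 = v₀^2 := by
    rw [mul_pow, ← pow_mul, mul_comm r 2, pow_mul]
    norm_num
  rw [hsq1] at hCS
  have hr1 : (0:ℝ) < 2*(r:ℝ)+1 := by positivity
  have hCS' : v₀^2 ≤ (∫ s in t₀..t₁, (p.eval s)^2) * ((t₁-t₀)/(2*(r:ℝ)+1)) := hCS
  have hCS2 : v₀^2 * (2*(r:ℝ)+1) ≤ (∫ s in t₀..t₁, (p.eval s)^2) * (t₁-t₀) := by
    have h := mul_le_mul_of_nonneg_right hCS' hr1.le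
    rwa [mul_assoc, div_mul_cancel₀ _ hr1.ne'] at h
  have hW2eq : W2 = (∫ s in t₀..t₁, (p.eval s)^2)
      + 2*lam*(∫ s in t₀..t₁, p.eval s * v.eval s)
      + lam^2 * (∫ s in t₀..t₁, (v.eval s)^2) := by
    have hsplit : ∀ s : ℝ, (w.eval s)^2
        = (p.eval s)^2 + ((2*lam)*(p.eval s * v.eval s) + lam^2*((v.eval s)^2)) := by
      intro s; rw [hwe s]; ring
    rw [hW2def, intervalIntegral.integral_congr (fun s _ => hsplit s),
      intervalIntegral.integral_add (f := fun s => (p.eval s)^2)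
          (g := fun s => (2*lam)*(p.eval s * v.eval s) + lam^2*((v.eval s)^2))
        (Continuous.intervalIntegrable (p.continuous.pow 2) _ _)
        (Continuous.intervalIntegrable ((continuous_const.mul
          (p.continuous.mul v.continuous)).add
          (continuous_const.mul (v.continuous.pow 2))) _ _),
      intervalIntegral.integral_add (f := fun s => (2*lam)*(p.eval s * v.eval s))
          (g := fun s => lam^2*((v.eval s)^2))
        (Continuous.intervalIntegrable (continuous_const.mul
          (p.continuous.mul v.continuous)) _ _)
        (Continuous.intervalIntegrable (continuous_const.mul (v.continuous.pow 2)) _ _),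
      intervalIntegral.integral_const_mul, intervalIntegral.integral_const_mul]
    ring
  have hv2nn : 0 ≤ ∫ s in t₀..t₁, (v.eval s)^2 :=
    intervalIntegral.integral_nonneg ht.le (fun s _ => sq_nonneg _)
  have hp2nn : 0 ≤ ∫ s in t₀..t₁, (p.eval s)^2 :=
    intervalIntegral.integral_nonneg ht.le (fun s _ => sq_nonneg _)
  have hkW2 : (t₁-t₀) * W2 = (t₁-t₀) * (∫ s in t₀..t₁, (p.eval s)^2)
      + (t₁-t₀)*lam*(v.eval t₁^2 + v₀^2)
      + (t₁-t₀)*lam^2*(∫ s in t₀..t₁, (v.eval s)^2) := by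
    rw [hW2eq, hEnergy]; ring
  have hkey : v₀^2 * ((2*(r:ℝ)+1) + (t₁-t₀)*lam) ≤ (t₁-t₀) * W2 := by
    rw [hkW2]
    linarith [hCS2,
      mul_nonneg (mul_nonneg hk.le hlam.le) (sq_nonneg (v.eval t₁)),
      mul_nonneg (mul_nonneg hk.le (mul_nonneg hlam.le hlam.le)) hv2nn]
  have hρpos : 0 < (t₁-t₀)*lam := mul_pos hk hlam
  have hrnn : (0:ℝ) ≤ (r:ℝ) := Nat.cast_nonneg r
  have hden : (0:ℝ) < 2*(2*(r:ℝ)+1) + (t₁-t₀)*lam := by linarith [hρpos]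
  have h3 : v₀^2 ≤ (3/(2*(2*(r:ℝ)+1) + (t₁-t₀)*lam)) * ((t₁-t₀)*W2) := by
    rw [div_mul_eq_mul_div, le_div_iff₀ hden]
    have e1 : 0 ≤ v₀^2 * (r:ℝ) := mul_nonneg (sq_nonneg v₀) hrnn
    have e2 : 0 ≤ v₀^2 * ((t₁-t₀)*lam) := mul_nonneg (sq_nonneg v₀) hρpos.le
    linarith [hkey, sq_nonneg v₀, e1, e2]
  have hUps : |v₀| ≤ Upsilon r ((t₁-t₀)*lam) * (Real.sqrt (t₁-t₀) * Real.sqrt W2) := by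
    have h4 : |v₀| ≤ Real.sqrt ((3/(2*(2*(r:ℝ)+1) + (t₁-t₀)*lam)) * ((t₁-t₀)*W2)) := by
      rw [← Real.sqrt_sq_eq_abs]
      exact Real.sqrt_le_sqrt h3
    calc |v₀| ≤ Real.sqrt ((3/(2*(2*(r:ℝ)+1) + (t₁-t₀)*lam)) * ((t₁-t₀)*W2)) := h4
    _ = Upsilon r ((t₁-t₀)*lam) * (Real.sqrt (t₁-t₀) * Real.sqrt W2) := by
        rw [Real.sqrt_mul (by positivity), Real.sqrt_mul hk.le, Upsilon]
  ------------------------------------------------------------------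
  -- Step 2 : the ODE for ψ and e₀ ≠ 0
  ------------------------------------------------------------------
  have hψode : derivative ψ + C lam * ψ = Lop t₀ t₁ r K (1 - ψ.eval t₀) := by
    have h := hψ
    rw [Gam] at h
    have h2 : Lop t₀ t₁ r K (1 - ψ.eval t₀)
        = Lop t₀ t₁ r K 1 - Lop t₀ t₁ r K (ψ.eval t₀) := by
      rw [hLopz (1 - ψ.eval t₀), hLopz (ψ.eval t₀)]
      simp [C_sub, sub_mul]
    rw [h2, ← h]
    ring
  have he₀val : errF t₀ lam ψ t₀ = 1 - ψ.eval t₀ := by simp [errF]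
  have he₀ : errF t₀ lam ψ t₀ ≠ 0 := by
    rw [he₀val]
    intro h0
    have hz : derivative ψ + C lam * ψ = 0 := by
      rw [hψode, h0]
      simp [Lop]
    have hψzero : ψ = 0 := by
      by_contra hne
      have hc := congrArg (fun pp : Polynomial ℝ => pp.coeff ψ.natDegree) hz
      simp only [coeff_add, coeff_C_mul, coeff_derivative, coeff_zero,
        coeff_eq_zero_of_natDegree_lt (Nat.lt_succ_self ψ.natDegree), zero_mul] at hc
      have hlead := Polynomial.leadingCoeff_ne_zero.2 hne
      rw [leadingCoeff] at hlead
      rcases mul_eq_zero.1 (by linarith [hc] : lam * ψ.coeff ψ.natDegree = 0) with h | h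
      · exact hlam.ne' h
      · exact hlead h
    rw [hψzero] at h0
    simp at h0
  have he₀' : (1:ℝ) - ψ.eval t₀ ≠ 0 := by rw [← he₀val]; exact he₀
  ------------------------------------------------------------------
  -- Step 3 : Duhamel representation at t
  ------------------------------------------------------------------
  set u : ℝ → ℝ := fun s => Real.exp (lam*(s-t₀)) with hu
  set A := ∫ s in t₀..t, u s * w.eval s with hA
  set B := ∫ s in t₀..t, u s * ℓ s with hB
  have hucont : Continuous u := Real.continuous_exp.comp (by fun_prop)
  have hDv : u t * v.eval t - v₀ = A - v₀ * B := by
    have heq : derivative v + C lam * v = w - Lop t₀ t₁ r K (v.eval t₀) := by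
      rw [hwp, hpdef]; ring
    have h := duhamel t₀ lam v (w - Lop t₀ t₁ r K (v.eval t₀)) heq t
    have h2 : ∀ s : ℝ, u s * (w - Lop t₀ t₁ r K (v.eval t₀)).eval s
        = u s * w.eval s - v₀ * (u s * ℓ s) := by
      intro s; rw [eval_sub, hLopz (v.eval t₀), eval_mul, eval_C, hv₀def, hℓ]; ring
    rw [intervalIntegral.integral_congr (fun s _ => h2 s),
      intervalIntegral.integral_sub (f := fun s => u s * w.eval s) (g := fun s => v₀ * (u s * ℓ s))
        (Continuous.intervalIntegrable (hucont.mul w.continuous) _ _)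
        (Continuous.intervalIntegrable (continuous_const.mul
          (hucont.mul (Lop t₀ t₁ r K 1).continuous)) _ _),
      intervalIntegral.integral_const_mul] at h
    exact h
  have hDψ : u t * ψ.eval t - ψ.eval t₀ = (1 - ψ.eval t₀) * B := by
    have h := duhamel t₀ lam ψ _ hψode t
    have h2 : ∀ s : ℝ, u s * (Lop t₀ t₁ r K (1 - ψ.eval t₀)).eval s
        = (1 - ψ.eval t₀) * (u s * ℓ s) := by
      intro s; rw [hLopz (1 - ψ.eval t₀), eval_mul, eval_C, hℓ]; ring
    rw [intervalIntegral.integral_congr (fun s _ => h2 s),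
      intervalIntegral.integral_const_mul] at h
    exact h
  have hut : (0:ℝ) < u t := Real.exp_pos _
  have hrep : v.eval t = v₀ / (1 - ψ.eval t₀) * ((u t)⁻¹ - ψ.eval t) + (u t)⁻¹ * A := by
    have hBval : B = (u t * ψ.eval t - ψ.eval t₀)/(1 - ψ.eval t₀) := by
      rw [eq_div_iff he₀']; linarith [hDψ]
    rw [hBval] at hDv
    have hu1 : u t * (u t)⁻¹ = 1 := mul_inv_cancel₀ hut.ne'
    have he1 : (1 - ψ.eval t₀) * (1 - ψ.eval t₀)⁻¹ = 1 := mul_inv_cancel₀ he₀'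
    linear_combination (u t)⁻¹ * hDv - (v.eval t + v₀ * (1 - ψ.eval t₀)⁻¹ * ψ.eval t) * hu1
      - (u t)⁻¹ * v₀ * he1
  set I2 := ∫ s in t₀..t, Real.exp (-lam*(t-s)) * w.eval s with hI2def
  have hIrw : I2 = (u t)⁻¹ * A := by
    rw [hI2def, hA, ← intervalIntegral.integral_const_mul]
    apply intervalIntegral.integral_congr
    intro s _
    have hexp : Real.exp (-lam*(t-s)) = (Real.exp (lam*(t-t₀)))⁻¹ * Real.exp (lam*(s-t₀)) := by
      rw [← Real.exp_neg, ← Real.exp_add]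
      ring_nf
    simp only [hu]
    rw [hexp]
    ring
  have hrep2 : v.eval t = v₀ / errF t₀ lam ψ t₀ * errF t₀ lam ψ t + I2 := by
    rw [he₀val, hIrw, errF]
    have hinv : Real.exp (-lam*(t-t₀)) = (u t)⁻¹ := by
      rw [hu, ← Real.exp_neg]
      ring_nf
    rw [hinv, hrep]
  ------------------------------------------------------------------
  -- Step 4 : bound on I2
  ------------------------------------------------------------------
  have hI2bd : |I2| ≤ Real.sqrt (t₁-t₀) * Real.sqrt W2 := by
    set g : ℝ → ℝ := fun s => Real.exp (-lam*(t-s)) with hg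
    have hgcont : Continuous g := Real.continuous_exp.comp (by fun_prop)
    have hCS2 := cs_int g (fun s => w.eval s) hgcont w.continuous t₀ t ht0t.le
    have hg2 : (∫ s in t₀..t, (g s)^2) ≤ t₁ - t₀ := by
      have hle1 : ∀ s ∈ Set.Icc t₀ t, (g s)^2 ≤ 1 := by
        intro s hs
        have hneg : -lam*(t-s) ≤ 0 := by
          have h' := mul_nonneg hlam.le (sub_nonneg.2 hs.2)
          linarith
        have hgle : g s ≤ 1 := Real.exp_le_one_iff.2 hneg
        have hgpos : (0:ℝ) ≤ g s := (Real.exp_pos _).le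
        calc (g s)^2 = g s * g s := sq (g s)
        _ ≤ 1 * 1 := mul_le_mul hgle hgle hgpos zero_le_one
        _ = 1 := one_mul 1
      calc (∫ s in t₀..t, (g s)^2) ≤ ∫ _ in t₀..t, (1:ℝ) :=
            intervalIntegral.integral_mono_on ht0t.le
              (Continuous.intervalIntegrable (hgcont.pow 2) _ _)
              (Continuous.intervalIntegrable continuous_const _ _) hle1
      _ = t - t₀ := by simp
      _ ≤ t₁ - t₀ := by linarith
    have hw2 : (∫ s in t₀..t, (w.eval s)^2) ≤ W2 := by
      have hadj := intervalIntegral.integral_add_adjacent_intervals (f := fun s => (w.eval s)^2)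
        ((w.continuous.pow 2).intervalIntegrable (μ := volume) t₀ t)
        ((w.continuous.pow 2).intervalIntegrable (μ := volume) t t₁)
      have h2nd : 0 ≤ ∫ s in t..t₁, (w.eval s)^2 :=
        intervalIntegral.integral_nonneg htt1 (fun s _ => sq_nonneg _)
      rw [hW2def]
      linarith [hadj]
    have hw2nn : 0 ≤ ∫ s in t₀..t, (w.eval s)^2 :=
      intervalIntegral.integral_nonneg ht0t.le (fun s _ => sq_nonneg _)
    have hg2nn : 0 ≤ ∫ s in t₀..t, (g s)^2 :=
      intervalIntegral.integral_nonneg ht0t.le (fun s _ => sq_nonneg _)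
    have hsq : I2^2 ≤ (t₁-t₀) * W2 := by
      have hI2g : I2 = ∫ s in t₀..t, g s * w.eval s := by rw [hI2def]
      have hprod : (∫ s in t₀..t, (g s)^2) * (∫ s in t₀..t, (w.eval s)^2)
          ≤ (t₁-t₀) * W2 := mul_le_mul hg2 hw2 hw2nn hk.le
      rw [hI2g]
      calc (∫ s in t₀..t, g s * w.eval s)^2
          ≤ (∫ s in t₀..t, (g s)^2) * (∫ s in t₀..t, (w.eval s)^2) := hCS2
      _ ≤ (t₁-t₀) * W2 := hprod
    calc |I2| = Real.sqrt (I2^2) := (Real.sqrt_sq_eq_abs I2).symm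
    _ ≤ Real.sqrt ((t₁-t₀)*W2) := Real.sqrt_le_sqrt hsq
    _ = Real.sqrt (t₁-t₀) * Real.sqrt W2 := Real.sqrt_mul hk.le _
  ------------------------------------------------------------------
  -- Step 5 : the supremum
  ------------------------------------------------------------------
  set f : ℝ → ℝ := fun s => |errF t₀ lam ψ s / errF t₀ lam ψ t₀| with hf
  have hfcont : Continuous f := by
    apply Continuous.abs
    apply Continuous.div_const
    exact (Real.continuous_exp.comp (by fun_prop)).sub ψ.continuous
  have hfnn : ∀ s, 0 ≤ f s := fun s => abs_nonneg _
  obtain ⟨M, hM⟩ := (isCompact_Icc (a := t₀) (b := t₁)).bddAbove_image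
    hfcont.continuousOn
  set S := ⨆ s ∈ Set.Ioc t₀ t₁, f s with hS
  have hbdd : BddAbove (Set.range fun s => ⨆ _ : s ∈ Set.Ioc t₀ t₁, f s) := by
    refine ⟨max M 0, ?_⟩
    rintro x ⟨s, rfl⟩
    show (⨆ _ : s ∈ Set.Ioc t₀ t₁, f s) ≤ max M 0
    by_cases hs : s ∈ Set.Ioc t₀ t₁
    · haveI : Nonempty (s ∈ Set.Ioc t₀ t₁) := ⟨hs⟩
      rw [ciSup_const]
      exact le_max_of_le_left (hM ⟨s, Set.Ioc_subset_Icc_self hs, rfl⟩)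
    · haveI : IsEmpty (s ∈ Set.Ioc t₀ t₁) := isEmpty_Prop.2 hs
      rw [Real.iSup_of_isEmpty]
      exact le_max_right _ _
  have hfS : f t ≤ S := by
    have h1 : (⨆ _ : t ∈ Set.Ioc t₀ t₁, f t) = f t := by
      haveI : Nonempty (t ∈ Set.Ioc t₀ t₁) := ⟨⟨ht0t, htt1⟩⟩
      exact ciSup_const
    rw [hS, ← h1]
    exact le_ciSup hbdd t
  have hSnn : 0 ≤ S := le_trans (hfnn t) hfS
  ------------------------------------------------------------------
  -- Step 6 : assembly
  ------------------------------------------------------------------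
  have hUpsnn : 0 ≤ Upsilon r ((t₁-t₀)*lam) := Real.sqrt_nonneg _
  have habs : |v.eval t| ≤ |v₀| * f t + |I2| := by
    rw [hrep2]
    refine le_trans (abs_add_le _ _) ?_
    have h1 : |v₀ / errF t₀ lam ψ t₀ * errF t₀ lam ψ t| = |v₀| * f t := by
      rw [hf]
      rw [show v₀ / errF t₀ lam ψ t₀ * errF t₀ lam ψ t
        = v₀ * (errF t₀ lam ψ t / errF t₀ lam ψ t₀) by ring, abs_mul]
    rw [h1]
  have hmain : |v.eval t| ≤ (Upsilon r ((t₁-t₀)*lam) * (Real.sqrt (t₁-t₀) * Real.sqrt W2)) * S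
      + Real.sqrt (t₁-t₀) * Real.sqrt W2 := by
    refine le_trans habs (add_le_add ?_ hI2bd)
    exact mul_le_mul hUps hfS (hfnn t) (by positivity)
  rw [CL2]
  calc |v.eval t| ≤ _ := hmain
  _ = (Upsilon r ((t₁ - t₀) * lam) *
      (⨆ s ∈ Set.Ioc t₀ t₁, |errF t₀ lam ψ s / errF t₀ lam ψ t₀|) + 1) *
      Real.sqrt (t₁ - t₀) * Real.sqrt W2 := by
    rw [← hS]
    ring
end
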